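/- Let (u₀,v₀) be a standard pair, V₀ the class of non-decreasing v₀-convex functions, and let F₁, F₂ be cdf's satisfying conditions (a) and (b)'. Then the lower ordering F₁ ≺_{(u₀,v₀)} F₂ holds if and only if ∫_{0}^{1} u₀(F₁⁻¹(α)) dv(α) ≤ ∫_{0}^{1} u₀(F₂⁻¹(α)) dv(α) for all v ∈ V₀. -/

import Mathlib

open MeasureTheory Set Filter Topology Function

noncomputable section

/-- A cumulative distribution function: non-decreasing, right-continuous,
with limit 0 at -∞ and limit 1 at +∞. -/
structure IsCDF (F : ℝ → ℝ) : Prop where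
  mono : Monotone F
  right_cont : ∀ x, ContinuousWithinAt F (Ici x) x
  tendsto_atBot : Tendsto F atBot (𝓝 0)
  tendsto_atTop : Tendsto F atTop (𝓝 1)

/-- The quantile function `F⁻¹ (α) = inf {x | F x ≥ α}`. -/
def qf (F : ℝ → ℝ) (α : ℝ) : ℝ := sInf {x | α ≤ F x}

/-- `(u₀, v₀)` is a standard pair: `u₀ : ℝ → ℝ` non-decreasing left-continuous,
`v₀ : [0,1] → [0,1]` non-decreasing right-continuous with `v₀ 0 = 0` and `v₀ (1⁻) = 1`. -/
structure StandardPair (u₀ v₀ : ℝ → ℝ) : Prop where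
  u_mono : Monotone u₀
  u_left_cont : ∀ x, ContinuousWithinAt u₀ (Iic x) x
  v_mono : MonotoneOn v₀ (Icc 0 1)
  v_right_cont : ∀ α ∈ Ico (0:ℝ) 1, Tendsto v₀ (𝓝[>] α) (𝓝 (v₀ α))
  v_mem : ∀ α ∈ Icc (0:ℝ) 1, v₀ α ∈ Icc (0:ℝ) 1
  v_zero : v₀ 0 = 0
  v_one : Tendsto v₀ (𝓝[<] (1:ℝ)) (𝓝 1)

/-- `μ` is the Lebesgue–Stieltjes measure of the left-continuous integrator `g` on `ℝ`:
`μ [a,b) = g b - g a`. -/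
def IsLSL (g : ℝ → ℝ) (μ : Measure ℝ) : Prop :=
  ∀ a b : ℝ, a ≤ b → μ (Ico a b) = ENNReal.ofReal (g b - g a)

/-- `μ` is the Lebesgue–Stieltjes measure of the right-continuous integrator `g` on `ℝ`:
`μ (a,b] = g b - g a`. -/
def IsLSR (g : ℝ → ℝ) (μ : Measure ℝ) : Prop :=
  ∀ a b : ℝ, a ≤ b → μ (Ioc a b) = ENNReal.ofReal (g b - g a)

/-- `μ` behaves on `[0,1]` as the Lebesgue–Stieltjes measure of the right-continuous
integrator `g`: `μ (a,b] = g b - g a` for `0 ≤ a ≤ b ≤ 1`. -/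
def IsLSR01 (g : ℝ → ℝ) (μ : Measure ℝ) : Prop :=
  ∀ a b : ℝ, 0 ≤ a → a ≤ b → b ≤ 1 → μ (Ioc a b) = ENNReal.ofReal (g b - g a)

/-- `μ` behaves inside `(0,1)` as the Lebesgue–Stieltjes measure of the left-continuous
integrator `g`: `μ [a,b) = g b - g a` for `0 < a ≤ b < 1`. -/
def IsLSL01 (g : ℝ → ℝ) (μ : Measure ℝ) : Prop :=
  ∀ a b : ℝ, 0 < a → a ≤ b → b < 1 → μ (Ico a b) = ENNReal.ofReal (g b - g a)

/-- `u` has density `k` with respect to the Stieltjes measure `μ₀` of `u₀`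
(left-continuous convention `[a,b)`), i.e. `du = k du₀`:
`u b - u a = ∫_{[a,b)} k dμ₀` for all `a ≤ b`. -/
def HasDensity (u k : ℝ → ℝ) (μ₀ : Measure ℝ) : Prop :=
  ∀ a b : ℝ, a ≤ b → u b - u a = ∫ s in Ico a b, k s ∂μ₀

/-- The upper `(u₀,v₀)`-ordering `F₁ ≺^{(u₀,v₀)} F₂`:
`∫ v₀(F₁) du ≥ ∫ v₀(F₂) du` for every non-decreasing `u₀`-concave `u`, where such a `u`
is encoded through its Radon–Nikodym density `k = du/du₀` (bounded, non-negative,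
non-increasing), so that `du = k dμ₀`.  Here `μ₀` is the Stieltjes measure of `u₀`. -/
def UpperOrder (v₀ F₁ F₂ : ℝ → ℝ) (μ₀ : Measure ℝ) : Prop :=
  ∀ k : ℝ → ℝ, Antitone k → (∀ x, 0 ≤ k x) → (∃ C, ∀ x, k x ≤ C) →
    ∫⁻ x, ENNReal.ofReal (v₀ (F₂ x)) ∂(μ₀.withDensity fun x => ENNReal.ofReal (k x)) ≤
      ∫⁻ x, ENNReal.ofReal (v₀ (F₁ x)) ∂(μ₀.withDensity fun x => ENNReal.ofReal (k x))

/-- The lower `(u₀,v₀)`-ordering `F₁ ≺_{(u₀,v₀)} F₂`: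
`-∫ (1 - v₀(F₁)) du ≥ -∫ (1 - v₀(F₂)) du` for every non-decreasing `u₀`-convex `u`,
encoded through its density `m = du/du₀` (non-negative, non-decreasing). -/
def LowerOrder (v₀ F₁ F₂ : ℝ → ℝ) (μ₀ : Measure ℝ) : Prop :=
  ∀ m : ℝ → ℝ, Monotone m → (∀ x, 0 ≤ m x) →
    ∫⁻ x, ENNReal.ofReal (1 - v₀ (F₁ x)) ∂(μ₀.withDensity fun x => ENNReal.ofReal (m x)) ≤
      ∫⁻ x, ENNReal.ofReal (1 - v₀ (F₂ x)) ∂(μ₀.withDensity fun x => ENNReal.ofReal (m x))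

/-- Condition (a): `∫_ℝ |u₀(x)| dv₀(F(x)) < ∞`, where `ν` is the Stieltjes measure
of `v₀ ∘ F`. -/
def CondA (u₀ : ℝ → ℝ) (ν : Measure ℝ) : Prop :=
  ∫⁻ x, ENNReal.ofReal |u₀ x| ∂ν < ⊤

/-- Condition (b): `∫_{[0,p)} v₀(α) du₀(F⁻¹(α)) < ∞` for all `p < 1`, where `lam` is the
Stieltjes measure of `u₀ ∘ F⁻¹` on `(0,1)`. -/
def CondB (v₀ : ℝ → ℝ) (lam : Measure ℝ) : Prop :=
  ∀ p : ℝ, p < 1 → ∫⁻ α in Ioo 0 p, ENNReal.ofReal (v₀ α) ∂lam < ⊤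

/-- Condition (b)': `∫_ℝ (1 - v₀(F(x))) du₀(x) < ∞`, where `μ₀` is the Stieltjes
measure of `u₀`. -/
def CondB' (v₀ F : ℝ → ℝ) (μ₀ : Measure ℝ) : Prop :=
  ∫⁻ x, ENNReal.ofReal (1 - v₀ (F x)) ∂μ₀ < ⊤


open scoped ENNReal NNReal

namespace Aux

lemma cdf_nonneg {F : ℝ → ℝ} (hF : IsCDF F) (x : ℝ) : 0 ≤ F x :=
  le_of_tendsto hF.tendsto_atBot (eventually_atBot.2 ⟨x, fun y hy => hF.mono hy⟩)

lemma cdf_le_one {F : ℝ → ℝ} (hF : IsCDF F) (x : ℝ) : F x ≤ 1 :=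
  ge_of_tendsto hF.tendsto_atTop (eventually_atTop.2 ⟨x, fun y hy => hF.mono hy⟩)

lemma cdf_mem01 {F : ℝ → ℝ} (hF : IsCDF F) (x : ℝ) : F x ∈ Icc (0:ℝ) 1 :=
  ⟨cdf_nonneg hF x, cdf_le_one hF x⟩

lemma v_one_eq {u₀ v₀ : ℝ → ℝ} (hp : StandardPair u₀ v₀) : v₀ 1 = 1 := by
  refine le_antisymm (hp.v_mem 1 ⟨zero_le_one, le_refl _⟩).2 ?_
  refine le_of_tendsto hp.v_one ?_
  filter_upwards [Ioo_mem_nhdsLT_of_mem (show (1:ℝ) ∈ Ioc (0:ℝ) 1 by norm_num)] with a ha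
  exact hp.v_mono ⟨ha.1.le, ha.2.le⟩ ⟨zero_le_one, le_refl _⟩ ha.2.le

section qf

variable {F : ℝ → ℝ}

lemma qf_nonempty (hF : IsCDF F) {α : ℝ} (hα : α < 1) : {x | α ≤ F x}.Nonempty := by
  have : ∀ᶠ x in atTop, α < F x := hF.tendsto_atTop.eventually (eventually_gt_nhds hα)
  rcases this.exists with ⟨x, hx⟩
  exact ⟨x, hx.le⟩

lemma qf_bddBelow (hF : IsCDF F) {α : ℝ} (hα : 0 < α) : BddBelow {x | α ≤ F x} := by
  have : ∀ᶠ x in atBot, F x < α := hF.tendsto_atBot.eventually (eventually_lt_nhds hα)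
  rcases this.exists with ⟨z, hz⟩
  refine ⟨z, fun y hy => ?_⟩
  by_contra h
  exact absurd (le_trans hy (hF.mono (le_of_not_ge h))) (not_le.2 hz)

lemma qf_mem (hF : IsCDF F) {α : ℝ} (hα : 0 < α) (hα1 : α < 1) : α ≤ F (qf F α) := by
  have h1 : ∀ y ∈ Ioi (qf F α), α ≤ F y := by
    intro y hy
    rcases exists_lt_of_csInf_lt (qf_nonempty hF hα1) hy with ⟨s, hs, hsy⟩
    exact le_trans hs (hF.mono hsy.le)
  have h2 : Tendsto F (𝓝[>] (qf F α)) (𝓝 (F (qf F α))) :=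
    (hF.right_cont (qf F α)).mono_left (nhdsWithin_mono _ Ioi_subset_Ici_self)
  exact ge_of_tendsto h2 (eventually_mem_nhdsWithin.mono h1)

lemma qf_le_iff (hF : IsCDF F) {α x : ℝ} (hα : 0 < α) (hα1 : α < 1) : qf F α ≤ x ↔ α ≤ F x := by
  constructor
  · intro h
    exact le_trans (qf_mem hF hα hα1) (hF.mono h)
  · intro h
    exact csInf_le (qf_bddBelow hF hα) h

lemma lt_qf_iff (hF : IsCDF F) {α x : ℝ} (hα : 0 < α) (hα1 : α < 1) : x < qf F α ↔ F x < α := by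
  rw [← not_le, ← not_le, qf_le_iff hF hα hα1]

lemma qf_monoOn (hF : IsCDF F) : MonotoneOn (qf F) (Ioo 0 1) := by
  intro a ha b hb hab
  exact csInf_le_csInf (qf_bddBelow hF ha.1) (qf_nonempty hF hb.2)
    (fun x hx => le_trans hab hx)

end qf

/-- measurability of the indicator extension of a function monotone on `Ioo 0 1`. -/
lemma measurable_indicator_of_monotoneOn {f : ℝ → ℝ} (hf : MonotoneOn f (Ioo 0 1)) :
    Measurable ((Ioo (0:ℝ) 1).indicator f) := by
  apply measurable_of_Iio
  intro y
  have hdecomp : ((Ioo (0:ℝ) 1).indicator f) ⁻¹' Iio y =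
      {α ∈ Ioo (0:ℝ) 1 | f α < y} ∪ (if 0 < y then (Ioo (0:ℝ) 1)ᶜ else ∅) := by
    by_cases h0 : 0 < y
    · simp only [if_pos h0]
      ext α
      by_cases hα : α ∈ Ioo (0:ℝ) 1
      · simp [Set.indicator_of_mem hα, hα.1, hα.2]
      · simp [Set.indicator_of_notMem hα, hα, h0]
    · simp only [if_neg h0]
      ext α
      by_cases hα : α ∈ Ioo (0:ℝ) 1
      · simp [Set.indicator_of_mem hα, hα.1, hα.2]
      · simp only [mem_preimage, Set.indicator_of_notMem hα, mem_Iio, union_empty,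
          mem_setOf_eq, mem_Ioo]
        constructor
        · exact fun h => absurd h h0
        · rintro ⟨⟨h1, h2⟩, -⟩
          exact absurd ⟨h1, h2⟩ hα
  rw [hdecomp]
  have hS : MeasurableSet {α ∈ Ioo (0:ℝ) 1 | f α < y} := by
    have : OrdConnected {α ∈ Ioo (0:ℝ) 1 | f α < y} := by
      constructor
      intro a ha b hb z hz
      have hz' : z ∈ Ioo (0:ℝ) 1 := ⟨lt_of_lt_of_le ha.1.1 hz.1, lt_of_le_of_lt hz.2 hb.1.2⟩
      exact ⟨hz', lt_of_le_of_lt (hf hz' hb.1 hz.2) hb.2⟩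
    exact this.measurableSet
  split_ifs <;> [exact hS.union measurableSet_Ioo.compl; exact hS.union MeasurableSet.empty]

/-- measurable global version of the quantile function. -/
def eqf (F : ℝ → ℝ) : ℝ → ℝ := (Ioo (0:ℝ) 1).indicator (qf F)

lemma eqf_eq {F : ℝ → ℝ} {α : ℝ} (hα : α ∈ Ioo (0:ℝ) 1) : eqf F α = qf F α :=
  Set.indicator_of_mem hα _

lemma measurable_eqf {F : ℝ → ℝ} (hF : IsCDF F) : Measurable (eqf F) :=
  measurable_indicator_of_monotoneOn (qf_monoOn hF)

end Aux

namespace Aux2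
open Aux

variable {u₀ v₀ : ℝ → ℝ} {μ₀ η : Measure ℝ}

lemma sigmaFinite_of_isLSL (hμ₀ : IsLSL u₀ μ₀) : SigmaFinite μ₀ := by
  refine ⟨⟨⟨fun n => Ico (-(n:ℝ)) n, fun _ => trivial, fun n => ?_, ?_⟩⟩⟩
  · rw [hμ₀ _ _ ((neg_nonpos.2 n.cast_nonneg).trans n.cast_nonneg)]
    exact ENNReal.ofReal_lt_top
  · apply eq_univ_of_forall
    intro x
    rcases exists_nat_gt |x| with ⟨n, hn⟩
    have := abs_lt.1 hn
    exact mem_iUnion.2 ⟨n, ⟨this.1.le, this.2⟩⟩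

lemma seq_pos (n : ℕ) : 0 < 1/((n:ℝ)+1) := by positivity

lemma seq_le_one (n : ℕ) : 1/((n:ℝ)+1) ≤ 1 := by
  rw [div_le_one (by positivity)]
  simp

lemma eta_singleton_one (hp : StandardPair u₀ v₀) (hη : IsLSR01 v₀ η) : η {(1:ℝ)} = 0 := by
  set s : ℕ → Set ℝ := fun n => Ioc (1 - 1/((n:ℝ)+1)) 1 with hs
  have hInter : ⋂ n, s n = {(1:ℝ)} := by
    ext x
    simp only [mem_iInter, hs, mem_Ioc, mem_singleton_iff]
    constructor
    · intro h
      refine le_antisymm (h 0).2 ?_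
      have h1 : Tendsto (fun n : ℕ => 1 - 1/((n:ℝ)+1)) atTop (𝓝 1) := by
        simpa using (tendsto_const_nhds (x := (1:ℝ))).sub tendsto_one_div_add_atTop_nhds_zero_nat
      exact le_of_tendsto h1 (Eventually.of_forall fun n => (h n).1.le)
    · rintro rfl
      exact fun n => ⟨by linarith [seq_pos n], le_refl _⟩
  have hmono : Antitone s := by
    intro a b hab
    apply Ioc_subset_Ioc_left
    have : 1/((b:ℝ)+1) ≤ 1/((a:ℝ)+1) := by
      apply one_div_le_one_div_of_le (by positivity)
      have := (Nat.cast_le (α := ℝ)).2 hab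
      linarith
    linarith
  have htendsto := tendsto_measure_iInter_atTop (μ := η) (s := s)
    (fun n => measurableSet_Ioc.nullMeasurableSet) hmono
    ⟨0, by rw [hs]; simp only; rw [hη _ _ (by norm_num) (by norm_num) le_rfl]; exact ENNReal.ofReal_ne_top⟩
  rw [hInter] at htendsto
  have hval : ∀ n : ℕ, (η ∘ s) n = ENNReal.ofReal (1 - v₀ (1 - 1/((n:ℝ)+1))) := by
    intro n
    have h0 : (0:ℝ) ≤ 1 - 1/((n:ℝ)+1) := by linarith [seq_le_one n]
    have := hη (1 - 1/((n:ℝ)+1)) 1 h0 (by linarith [seq_pos n]) le_rfl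
    simpa [hs, v_one_eq hp] using this
  have h2 : Tendsto (fun n : ℕ => ENNReal.ofReal (1 - v₀ (1 - 1/((n:ℝ)+1)))) atTop (𝓝 0) := by
    have hseq : Tendsto (fun n : ℕ => 1 - 1/((n:ℝ)+1)) atTop (𝓝[<] 1) := by
      apply tendsto_nhdsWithin_of_tendsto_nhds_of_eventually_within
      · simpa using (tendsto_const_nhds (x := (1:ℝ))).sub tendsto_one_div_add_atTop_nhds_zero_nat
      · exact Eventually.of_forall fun n => by simp [mem_Iio]; linarith [seq_pos n]
    have hv : Tendsto (fun n : ℕ => 1 - v₀ (1 - 1/((n:ℝ)+1))) atTop (𝓝 (1 - 1)) :=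
      Tendsto.sub (tendsto_const_nhds : Tendsto (fun _ : ℕ => (1:ℝ)) atTop (𝓝 1))
        (hp.v_one.comp hseq)
    rw [sub_self] at hv
    have := (ENNReal.continuous_ofReal.tendsto 0).comp hv
    simpa [Function.comp_def] using this
  exact tendsto_nhds_unique htendsto (h2.congr (fun n => (hval n).symm))

lemma eta_Ioo_one (hp : StandardPair u₀ v₀) (hη : IsLSR01 v₀ η) {a : ℝ} (ha : a ∈ Icc (0:ℝ) 1) :
    η (Ioo a 1) = ENNReal.ofReal (1 - v₀ a) := by
  rcases eq_or_lt_of_le ha.2 with h|h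
  · subst h
    simp [v_one_eq hp]
  · have hunion : Ioc a 1 = Ioo a 1 ∪ {1} := (Ioo_union_right h).symm
    have hdisj : Disjoint (Ioo a (1:ℝ)) {1} := by
      simp [disjoint_singleton_right]
    have := measure_union (μ := η) hdisj (measurableSet_singleton 1)
    rw [← hunion, eta_singleton_one hp hη, add_zero] at this
    rw [← this, hη a 1 ha.1 ha.2 le_rfl, v_one_eq hp]

lemma eta_Ioo01 (hp : StandardPair u₀ v₀) (hη : IsLSR01 v₀ η) :
    η (Ioo (0:ℝ) 1) = 1 := by
  rw [eta_Ioo_one hp hη ⟨le_refl 0, zero_le_one⟩, hp.v_zero]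
  simp

lemma eta_fin01 (hp : StandardPair u₀ v₀) (hη : IsLSR01 v₀ η) :
    IsFiniteMeasure (η.restrict (Ioo (0:ℝ) 1)) := by
  constructor
  rw [Measure.restrict_apply_univ, eta_Ioo01 hp hη]
  exact ENNReal.one_lt_top

lemma eta_Ioi (hp : StandardPair u₀ v₀) (hη : IsLSR01 v₀ η) {c : ℝ} (hc : c ∈ Icc (0:ℝ) 1) :
    (η.restrict (Ioo (0:ℝ) 1)) (Ioi c) = ENNReal.ofReal (1 - v₀ c) := by
  rw [Measure.restrict_apply measurableSet_Ioi]
  have : Ioi c ∩ Ioo (0:ℝ) 1 = Ioo c 1 := by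
    ext x
    simp only [mem_inter_iff, mem_Ioi, mem_Ioo]
    constructor
    · rintro ⟨h1, _, h3⟩; exact ⟨h1, h3⟩
    · rintro ⟨h1, h2⟩; exact ⟨h1, lt_of_le_of_lt hc.1 h1, h2⟩
  rw [this, eta_Ioo_one hp hη hc]

lemma eta_Iic (hp : StandardPair u₀ v₀) (hη : IsLSR01 v₀ η) {c : ℝ} (hc : c ∈ Icc (0:ℝ) 1) :
    η (Ioo (0:ℝ) 1 ∩ Iic c) = ENNReal.ofReal (v₀ c) := by
  rcases lt_or_eq_of_le hc.2 with h|h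
  · have : Ioo (0:ℝ) 1 ∩ Iic c = Ioc 0 c := by
      ext x
      simp only [mem_inter_iff, mem_Ioo, mem_Iic, mem_Ioc]
      constructor
      · rintro ⟨⟨h1, _⟩, h3⟩; exact ⟨h1, h3⟩
      · rintro ⟨h1, h2⟩; exact ⟨⟨h1, lt_of_le_of_lt h2 h⟩, h2⟩
    rw [this, hη 0 c le_rfl hc.1 hc.2, hp.v_zero, sub_zero]
  · subst h
    have : Ioo (0:ℝ) 1 ∩ Iic 1 = Ioo 0 1 := by
      apply inter_eq_self_of_subset_left
      exact fun x hx => le_of_lt hx.2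
    rw [this, eta_Ioo01 hp hη, v_one_eq hp]
    simp

end Aux2

namespace Aux3
open Aux Aux2

variable {u₀ v₀ F : ℝ → ℝ} {μ₀ η : Measure ℝ}

/-- measurable version of `u₀ ∘ qf F`. -/
def Gf (u₀ F : ℝ → ℝ) : ℝ → ℝ := fun α => u₀ (eqf F α)

lemma Gf_eq {α : ℝ} (hα : α ∈ Ioo (0:ℝ) 1) : Gf u₀ F α = u₀ (qf F α) := by
  rw [Gf, eqf_eq hα]

lemma measurable_Gf (hu : Monotone u₀) (hF : IsCDF F) : Measurable (Gf u₀ F) :=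
  hu.measurable.comp (measurable_eqf hF)

lemma Gf_monoOn (hu : Monotone u₀) (hF : IsCDF F) : MonotoneOn (Gf u₀ F) (Ioo 0 1) := by
  intro a ha b hb hab
  rw [Gf_eq ha, Gf_eq hb]
  exact hu (qf_monoOn hF ha hb hab)

lemma monotone_clamp (hp : StandardPair u₀ v₀) :
    Monotone (fun x : ℝ => v₀ (max 0 (min 1 x))) := by
  intro a b hab
  have ha : max 0 (min 1 a) ∈ Icc (0:ℝ) 1 := ⟨le_max_left _ _, max_le zero_le_one (min_le_left _ _)⟩
  have hb : max 0 (min 1 b) ∈ Icc (0:ℝ) 1 := ⟨le_max_left _ _, max_le zero_le_one (min_le_left _ _)⟩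
  exact hp.v_mono ha hb (max_le_max le_rfl (min_le_min le_rfl hab))

lemma clamp_eq {x : ℝ} (hx : x ∈ Icc (0:ℝ) 1) : max 0 (min 1 x) = x := by
  rw [min_eq_right hx.2, max_eq_right hx.1]

lemma measurable_W (hp : StandardPair u₀ v₀) (hF : IsCDF F) :
    Measurable (fun x => ENNReal.ofReal (1 - v₀ (F x))) := by
  have h1 : Measurable (fun x => ENNReal.ofReal (1 - v₀ (max 0 (min 1 (F x))))) :=
    (measurable_const.sub ((monotone_clamp hp).measurable.comp hF.mono.measurable)).ennreal_ofReal
  have h2 : (fun x => ENNReal.ofReal (1 - v₀ (F x)))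
      = fun x => ENNReal.ofReal (1 - v₀ (max 0 (min 1 (F x)))) := by
    funext x
    rw [clamp_eq (cdf_mem01 hF x)]
  rw [h2]
  exact h1

/-- The key Fubini bridge. -/
lemma bridge (hp : StandardPair u₀ v₀) (hF : IsCDF F) (hμ₀ : IsLSL u₀ μ₀) (hη : IsLSR01 v₀ η)
    (t : ℝ) :
    ∫⁻ x in Ici t, ENNReal.ofReal (1 - v₀ (F x)) ∂μ₀
      = ∫⁻ α in Ioo (0:ℝ) 1, ENNReal.ofReal (Gf u₀ F α - u₀ t) ∂η := by
  haveI : SigmaFinite μ₀ := sigmaFinite_of_isLSL hμ₀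
  haveI : IsFiniteMeasure (η.restrict (Ioo (0:ℝ) 1)) := eta_fin01 hp hη
  set A : Set (ℝ × ℝ) := {p : ℝ × ℝ | F p.1 < p.2} with hA
  have hAmeas : MeasurableSet A :=
    measurableSet_lt (hF.mono.measurable.comp measurable_fst) measurable_snd
  have huncurry : Measurable (uncurry (fun (x α : ℝ) => A.indicator (fun _ => (1:ℝ≥0∞)) (x, α))) := by
    have h : uncurry (fun (x α : ℝ) => A.indicator (fun _ => (1:ℝ≥0∞)) (x, α))
        = A.indicator (fun _ => 1) := by
      funext p; cases p; rfl
    rw [h]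
    exact measurable_const.indicator hAmeas
  have step1 : ∀ x : ℝ, ENNReal.ofReal (1 - v₀ (F x))
      = ∫⁻ α, A.indicator (fun _ => (1:ℝ≥0∞)) (x, α) ∂(η.restrict (Ioo 0 1)) := by
    intro x
    have h1 : (fun α => A.indicator (fun _ => (1:ℝ≥0∞)) (x, α))
        = (Ioi (F x)).indicator (fun _ => 1) := by
      funext α
      by_cases h : F x < α
      · rw [Set.indicator_of_mem (show (x,α) ∈ A from h),
          Set.indicator_of_mem (show α ∈ Ioi (F x) from h)]
      · rw [Set.indicator_of_notMem (show (x,α) ∉ A from h),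
          Set.indicator_of_notMem (show α ∉ Ioi (F x) from h)]
    rw [h1, lintegral_indicator measurableSet_Ioi, setLIntegral_one, eta_Ioi hp hη (cdf_mem01 hF x)]
  have step3 : ∀ α : ℝ, ∫⁻ x in Ici t, A.indicator (fun _ => (1:ℝ≥0∞)) (x, α) ∂μ₀
      = (μ₀.restrict (Ici t)) {x | F x < α} := by
    intro α
    have h1 : (fun x => A.indicator (fun _ => (1:ℝ≥0∞)) (x, α))
        = ({x : ℝ | F x < α}).indicator (fun _ => 1) := by
      funext x
      by_cases h : F x < α
      · rw [Set.indicator_of_mem (show (x,α) ∈ A from h),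
          Set.indicator_of_mem (show x ∈ {x : ℝ | F x < α} from h)]
      · rw [Set.indicator_of_notMem (show (x,α) ∉ A from h),
          Set.indicator_of_notMem (show x ∉ {x : ℝ | F x < α} from h)]
    rw [h1, lintegral_indicator
      (by exact hF.mono.measurable measurableSet_Iio : MeasurableSet {x : ℝ | F x < α}),
      setLIntegral_one]
  calc ∫⁻ x in Ici t, ENNReal.ofReal (1 - v₀ (F x)) ∂μ₀
      = ∫⁻ x in Ici t, ∫⁻ α, A.indicator (fun _ => (1:ℝ≥0∞)) (x, α) ∂(η.restrict (Ioo 0 1)) ∂μ₀ :=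
        lintegral_congr (fun x => step1 x)
    _ = ∫⁻ α, ∫⁻ x in Ici t, A.indicator (fun _ => (1:ℝ≥0∞)) (x, α) ∂μ₀ ∂(η.restrict (Ioo 0 1)) :=
        lintegral_lintegral_swap huncurry.aemeasurable
    _ = ∫⁻ α, (μ₀.restrict (Ici t)) {x | F x < α} ∂(η.restrict (Ioo 0 1)) :=
        lintegral_congr (fun α => step3 α)
    _ = ∫⁻ α in Ioo (0:ℝ) 1, ENNReal.ofReal (Gf u₀ F α - u₀ t) ∂η := by
        apply setLIntegral_congr_fun measurableSet_Ioo
        intro α hα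
        have hset : {x : ℝ | F x < α} = Iio (qf F α) := by
          ext x
          exact (lt_qf_iff hF hα.1 hα.2).symm
        dsimp only
        rw [hset, Measure.restrict_apply measurableSet_Iio, Iio_inter_Ici, Gf_eq hα]
        rcases le_or_gt t (qf F α) with h|h
        · exact hμ₀ t (qf F α) h
        · rw [Ico_eq_empty (not_lt.2 h.le), measure_empty, eq_comm, ENNReal.ofReal_eq_zero]
          exact sub_nonpos.2 (hp.u_mono h.le)
  
end Aux3

namespace Aux4
open Aux Aux2 Aux3

variable {u₀ v₀ F : ℝ → ℝ} {μ₀ η ν : Measure ℝ}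

lemma map_eqf (hp : StandardPair u₀ v₀) (hF : IsCDF F) (hη : IsLSR01 v₀ η)
    (hν : IsLSR (fun x => v₀ (F x)) ν) :
    Measure.map (eqf F) (η.restrict (Ioo 0 1)) = ν := by
  haveI : IsFiniteMeasure (Measure.map (eqf F) (η.restrict (Ioo 0 1))) := by
    constructor
    rw [Measure.map_apply (measurable_eqf hF) MeasurableSet.univ, preimage_univ,
      Measure.restrict_apply_univ, eta_Ioo01 hp hη]
    exact ENNReal.one_lt_top
  apply Measure.ext_of_Ioc
  intro a b hab
  rw [Measure.map_apply (measurable_eqf hF) measurableSet_Ioc,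
    Measure.restrict_apply (measurable_eqf hF measurableSet_Ioc)]
  have hkey : (eqf F ⁻¹' Ioc a b) ∩ Ioo 0 1
      = (Ioo 0 1 ∩ Iic (F b)) \ (Ioo 0 1 ∩ Iic (F a)) := by
    ext α
    constructor
    · rintro ⟨hpre, hα⟩
      rw [mem_preimage, eqf_eq hα, mem_Ioc] at hpre
      have hb : α ≤ F b := (qf_le_iff hF hα.1 hα.2).1 hpre.2
      have ha' : ¬ α ≤ F a := fun hle => (not_le.2 hpre.1) ((qf_le_iff hF hα.1 hα.2).2 hle)
      exact ⟨⟨hα, hb⟩, fun hmem => ha' hmem.2⟩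
    · rintro ⟨⟨hα, hb⟩, hna⟩
      have ha' : ¬ α ≤ F a := fun h => hna ⟨hα, h⟩
      refine ⟨?_, hα⟩
      rw [mem_preimage, eqf_eq hα, mem_Ioc]
      constructor
      · by_contra h
        exact ha' ((qf_le_iff hF hα.1 hα.2).1 (le_of_not_gt h))
      · exact (qf_le_iff hF hα.1 hα.2).2 hb
  rw [hkey, measure_diff
      (inter_subset_inter_right _ (Iic_subset_Iic.2 (hF.mono hab.le)))
      ((measurableSet_Ioo.inter measurableSet_Iic).nullMeasurableSet)
      (by rw [eta_Iic hp hη (cdf_mem01 hF a)]; exact ENNReal.ofReal_ne_top),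
    eta_Iic hp hη (cdf_mem01 hF b), eta_Iic hp hη (cdf_mem01 hF a), hν a b hab.le,
    ENNReal.ofReal_sub _ (hp.v_mem _ (cdf_mem01 hF a)).1]

lemma condA_transport (hp : StandardPair u₀ v₀) (hF : IsCDF F) (hη : IsLSR01 v₀ η)
    (hν : IsLSR (fun x => v₀ (F x)) ν) (ha : CondA u₀ ν) :
    ∫⁻ α in Ioo (0:ℝ) 1, ENNReal.ofReal |Gf u₀ F α| ∂η < ⊤ := by
  have hmeas : Measurable (fun x : ℝ => ENNReal.ofReal |u₀ x|) :=
    hp.u_mono.measurable.abs.ennreal_ofReal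
  have := ha
  rw [CondA, ← map_eqf hp hF hη hν, lintegral_map hmeas (measurable_eqf hF)] at this
  exact this

lemma integrable_Gf (hp : StandardPair u₀ v₀) (hF : IsCDF F) (hη : IsLSR01 v₀ η)
    (hν : IsLSR (fun x => v₀ (F x)) ν) (ha : CondA u₀ ν) :
    Integrable (Gf u₀ F) (η.restrict (Ioo 0 1)) := by
  refine ⟨(measurable_Gf hp.u_mono hF).aestronglyMeasurable, ?_⟩
  rw [hasFiniteIntegral_iff_norm]
  simpa [Real.norm_eq_abs] using condA_transport hp hF hη hν ha

end Aux4

namespace Aux5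
open Aux Aux2 Aux3 Aux4

variable {u₀ v₀ : ℝ → ℝ} {η : Measure ℝ} {G G₁ G₂ : ℝ → ℝ} {c : ℝ} {V : Set ℝ}

lemma ofReal_max0 (x : ℝ) : ENNReal.ofReal x = ENNReal.ofReal (max x 0) := by
  rcases le_total x 0 with h|h
  · rw [max_eq_right h, ENNReal.ofReal_eq_zero.2 h]
    simp
  · rw [max_eq_left h]

lemma integrableOn_sub_const (hfin : IsFiniteMeasure (η.restrict (Ioo (0:ℝ) 1)))
    (hG : IntegrableOn G (Ioo (0:ℝ) 1) η) (hVsub : V ⊆ Ioo 0 1) (c : ℝ) :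
    IntegrableOn (fun α => G α - c) V η := by
  haveI := hfin
  have h : IntegrableOn (fun α => G α - c) (Ioo (0:ℝ) 1) η := hG.sub (integrable_const c)
  exact h.mono_set hVsub

lemma lofReal_eq (hfin : IsFiniteMeasure (η.restrict (Ioo (0:ℝ) 1)))
    (hG : IntegrableOn G (Ioo (0:ℝ) 1) η) (c : ℝ) :
    ∫⁻ α in Ioo (0:ℝ) 1, ENNReal.ofReal (G α - c) ∂η
      = ENNReal.ofReal (∫ α in Ioo (0:ℝ) 1, max (G α - c) 0 ∂η) := by
  haveI := hfin
  have h1 : ∫⁻ α in Ioo (0:ℝ) 1, ENNReal.ofReal (G α - c) ∂η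
      = ∫⁻ α in Ioo (0:ℝ) 1, ENNReal.ofReal (max (G α - c) 0) ∂η :=
    lintegral_congr (fun α => ofReal_max0 _)
  have hint : Integrable (fun α => max (G α - c) 0) (η.restrict (Ioo (0:ℝ) 1)) :=
    (hG.sub (integrable_const c)).pos_part
  rw [h1, ← ofReal_integral_eq_lintegral_ofReal hint
    (ae_of_all _ (fun α => le_max_right _ _))]

lemma integral_sub_const (hfin : IsFiniteMeasure (η.restrict (Ioo (0:ℝ) 1)))
    (hG : IntegrableOn G (Ioo (0:ℝ) 1) η) (hV : MeasurableSet V) (hVsub : V ⊆ Ioo 0 1) (c : ℝ) :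
    ∫ α in V, (G α - c) ∂η = (∫ α in V, G α ∂η) - (η V).toReal * c := by
  haveI := hfin
  have hVfin : η V ≠ ⊤ := by
    refine ne_of_lt (lt_of_le_of_lt (measure_mono hVsub) ?_)
    have := hfin.measure_univ_lt_top
    rwa [Measure.restrict_apply_univ] at this
  rw [integral_sub (hG.mono_set hVsub) (integrableOn_const hVfin),
    setIntegral_const, smul_eq_mul, measureReal_def]

/-- positive part of `G₂ - c` concentrates on `V`. -/
lemma pospart_eq (hfin : IsFiniteMeasure (η.restrict (Ioo (0:ℝ) 1)))
    (hG : IntegrableOn G (Ioo (0:ℝ) 1) η) (hV : MeasurableSet V) (hVsub : V ⊆ Ioo 0 1)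
    (h₁ : ∀ α ∈ Ioo (0:ℝ) 1, α ∈ V → c ≤ G α) (h₂ : ∀ α ∈ Ioo (0:ℝ) 1, α ∉ V → G α ≤ c) :
    ∫ α in Ioo (0:ℝ) 1, max (G α - c) 0 ∂η = ∫ α in V, (G α - c) ∂η := by
  haveI := hfin
  have hpt : ∀ α ∈ Ioo (0:ℝ) 1, max (G α - c) 0 = V.indicator (fun α => G α - c) α := by
    intro α hα
    by_cases hmem : α ∈ V
    · rw [Set.indicator_of_mem hmem, max_eq_left (sub_nonneg.2 (h₁ α hα hmem))]
    · rw [Set.indicator_of_notMem hmem, max_eq_right (sub_nonpos.2 (h₂ α hα hmem))]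
  rw [setIntegral_congr_fun measurableSet_Ioo hpt, setIntegral_indicator hV,
    inter_eq_self_of_subset_right hVsub]

/-- bounding `∫_V (G - c)` by the positive part integral. -/
lemma le_pospart (hfin : IsFiniteMeasure (η.restrict (Ioo (0:ℝ) 1)))
    (hG : IntegrableOn G (Ioo (0:ℝ) 1) η) (hV : MeasurableSet V) (hVsub : V ⊆ Ioo 0 1) (c : ℝ) :
    ∫ α in V, (G α - c) ∂η ≤ ∫ α in Ioo (0:ℝ) 1, max (G α - c) 0 ∂η := by
  haveI := hfin
  have hint : IntegrableOn (fun α => G α - c) V η := integrableOn_sub_const hfin hG hVsub c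
  have hint2 : IntegrableOn (fun α => max (G α - c) 0) (Ioo (0:ℝ) 1) η :=
    (hG.sub (integrable_const c)).pos_part
  calc ∫ α in V, (G α - c) ∂η ≤ ∫ α in V, max (G α - c) 0 ∂η :=
        setIntegral_mono_on hint (hint2.mono_set hVsub) hV
          (fun α _ => le_max_left _ _)
    _ ≤ ∫ α in Ioo (0:ℝ) 1, max (G α - c) 0 ∂η := by
        apply setIntegral_mono_set hint2
        · exact ae_of_all _ (fun α => le_max_right _ _)
        · exact HasSubset.Subset.eventuallyLE hVsub

/-- From the `A`-inequality at a well-chosen level `c` to the tail inequality on `V`. -/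
lemma T_of_A (hfin : IsFiniteMeasure (η.restrict (Ioo (0:ℝ) 1)))
    (hG₁ : IntegrableOn G₁ (Ioo (0:ℝ) 1) η) (hG₂ : IntegrableOn G₂ (Ioo (0:ℝ) 1) η)
    (hV : MeasurableSet V) (hVsub : V ⊆ Ioo 0 1)
    (h₁ : ∀ α ∈ Ioo (0:ℝ) 1, α ∈ V → c ≤ G₂ α) (h₂ : ∀ α ∈ Ioo (0:ℝ) 1, α ∉ V → G₂ α ≤ c)
    (hA : ∫ α in Ioo (0:ℝ) 1, max (G₁ α - c) 0 ∂η ≤ ∫ α in Ioo (0:ℝ) 1, max (G₂ α - c) 0 ∂η) :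
    ∫ α in V, G₁ α ∂η ≤ ∫ α in V, G₂ α ∂η := by
  haveI := hfin
  have key : ∫ α in V, (G₁ α - c) ∂η ≤ ∫ α in V, (G₂ α - c) ∂η := by
    calc ∫ α in V, (G₁ α - c) ∂η
        ≤ ∫ α in Ioo (0:ℝ) 1, max (G₁ α - c) 0 ∂η := le_pospart hfin hG₁ hV hVsub c
      _ ≤ ∫ α in Ioo (0:ℝ) 1, max (G₂ α - c) 0 ∂η := hA
      _ = ∫ α in V, (G₂ α - c) ∂η := pospart_eq hfin hG₂ hV hVsub h₁ h₂
  rw [integral_sub_const hfin hG₁ hV hVsub c, integral_sub_const hfin hG₂ hV hVsub c] at key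
  linarith

/-- From tail inequalities to the `A`-inequality at any level `c`. -/
lemma A_of_T (hfin : IsFiniteMeasure (η.restrict (Ioo (0:ℝ) 1)))
    (hG₁ : IntegrableOn G₁ (Ioo (0:ℝ) 1) η) (hG₂ : IntegrableOn G₂ (Ioo (0:ℝ) 1) η)
    (hV : MeasurableSet V) (hVsub : V ⊆ Ioo 0 1)
    (hiff : ∀ α ∈ Ioo (0:ℝ) 1, α ∈ V ↔ c < G₁ α)
    (hTV : ∫ α in V, G₁ α ∂η ≤ ∫ α in V, G₂ α ∂η) :
    ∫ α in Ioo (0:ℝ) 1, max (G₁ α - c) 0 ∂η ≤ ∫ α in Ioo (0:ℝ) 1, max (G₂ α - c) 0 ∂η := by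
  haveI := hfin
  have h₁ : ∀ α ∈ Ioo (0:ℝ) 1, α ∈ V → c ≤ G₁ α := fun α hα hm => ((hiff α hα).1 hm).le
  have h₂ : ∀ α ∈ Ioo (0:ℝ) 1, α ∉ V → G₁ α ≤ c := fun α hα hm =>
    le_of_not_gt (fun h => hm ((hiff α hα).2 h))
  have key : ∫ α in V, (G₁ α - c) ∂η ≤ ∫ α in V, (G₂ α - c) ∂η := by
    rw [integral_sub_const hfin hG₁ hV hVsub c, integral_sub_const hfin hG₂ hV hVsub c]
    linarith
  calc ∫ α in Ioo (0:ℝ) 1, max (G₁ α - c) 0 ∂η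
      = ∫ α in V, (G₁ α - c) ∂η := pospart_eq hfin hG₁ hV hVsub h₁ h₂
    _ ≤ ∫ α in V, (G₂ α - c) ∂η := key
    _ ≤ ∫ α in Ioo (0:ℝ) 1, max (G₂ α - c) 0 ∂η := le_pospart hfin hG₂ hV hVsub c

end Aux5

namespace Aux6
open Aux Aux2 Aux3 Aux4 Aux5

variable {μ₀ η : Measure ℝ}

lemma upperset_cases (m : ℝ → ℝ) (hm : Monotone m) (s : ℝ) :
    {x | s < m x} = ∅ ∨ {x | s < m x} = univ ∨
      (∃ a, {x | s < m x} = Ioi a) ∨ (∃ a, {x | s < m x} = Ici a) := by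
  set U := {x | s < m x} with hU
  by_cases hne : U = ∅
  · exact Or.inl hne
  by_cases huniv : U = univ
  · exact Or.inr (Or.inl huniv)
  have hUne : U.Nonempty := nonempty_iff_ne_empty.2 hne
  have hbdd : BddBelow U := by
    rcases (ne_univ_iff_exists_notMem U).1 huniv with ⟨z, hz⟩
    refine ⟨z, fun y hy => ?_⟩
    by_contra h
    exact hz (mem_setOf.2 (lt_of_lt_of_le hy (hm (le_of_not_ge h))))
  set a := sInf U with ha
  by_cases hmem : a ∈ U
  · refine Or.inr (Or.inr (Or.inr ⟨a, ?_⟩))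
    apply Subset.antisymm
    · exact fun x hx => csInf_le hbdd hx
    · exact fun x hx => mem_setOf.2 (lt_of_lt_of_le hmem (hm hx))
  · refine Or.inr (Or.inr (Or.inl ⟨a, ?_⟩))
    apply Subset.antisymm
    · intro x hx
      rcases lt_or_eq_of_le (csInf_le hbdd hx) with h|h
      · exact h
      · exact absurd (by rwa [← h] at hx) hmem
    · intro x hx
      rcases exists_lt_of_csInf_lt hUne hx with ⟨u, hu, hux⟩
      exact mem_setOf.2 (lt_of_lt_of_le hu (hm hux.le))

lemma layercake (ρ : Measure ℝ) [SFinite ρ] {h : ℝ → ℝ≥0∞} (hh : Measurable h)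
    {m : ℝ → ℝ} (hm : Measurable m) (hm0 : ∀ x, 0 ≤ m x) :
    ∫⁻ x, h x * ENNReal.ofReal (m x) ∂ρ
      = ∫⁻ s in Ioi (0:ℝ), ∫⁻ x in {y | s < m y}, h x ∂ρ := by
  set A : Set (ℝ × ℝ) := {p | 0 < p.2 ∧ p.2 < m p.1} with hA
  have hAmeas : MeasurableSet A := by
    apply MeasurableSet.inter
    · exact measurableSet_lt measurable_const measurable_snd
    · exact measurableSet_lt measurable_snd (hm.comp measurable_fst)
  have huncurry : Measurable
      (uncurry (fun (x s : ℝ) => A.indicator (fun _ => (1:ℝ≥0∞)) (x, s) * h x)) := by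
    have heq : uncurry (fun (x s : ℝ) => A.indicator (fun _ => (1:ℝ≥0∞)) (x, s) * h x)
        = fun p : ℝ × ℝ => A.indicator (fun _ => (1:ℝ≥0∞)) p * h p.1 := by
      funext p; cases p; rfl
    rw [heq]
    exact (measurable_const.indicator hAmeas).mul (hh.comp measurable_fst)
  have step1 : ∀ x : ℝ, h x * ENNReal.ofReal (m x)
      = ∫⁻ s, A.indicator (fun _ => (1:ℝ≥0∞)) (x, s) * h x := by
    intro x
    have h1 : (fun s => A.indicator (fun _ => (1:ℝ≥0∞)) (x, s) * h x)
        = (Ioo 0 (m x)).indicator (fun _ => h x) := by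
      funext s
      by_cases hs : s ∈ Ioo 0 (m x)
      · rw [Set.indicator_of_mem (show (x,s) ∈ A from ⟨hs.1, hs.2⟩), one_mul,
          Set.indicator_of_mem hs]
      · rw [Set.indicator_of_notMem (show (x,s) ∉ A from fun hc => hs ⟨hc.1, hc.2⟩), zero_mul,
          Set.indicator_of_notMem hs]
    rw [h1, lintegral_indicator measurableSet_Ioo, setLIntegral_const, Real.volume_Ioo, sub_zero,
      mul_comm]
  have step3 : ∀ s : ℝ, ∫⁻ x, A.indicator (fun _ => (1:ℝ≥0∞)) (x, s) * h x ∂ρ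
      = (Ioi (0:ℝ)).indicator (fun s => ∫⁻ x in {y | s < m y}, h x ∂ρ) s := by
    intro s
    by_cases hs : 0 < s
    · have h1 : (fun x => A.indicator (fun _ => (1:ℝ≥0∞)) (x, s) * h x)
          = ({y | s < m y}).indicator h := by
        funext x
        by_cases hx : s < m x
        · rw [Set.indicator_of_mem (show (x,s) ∈ A from ⟨hs, hx⟩), one_mul,
            Set.indicator_of_mem (show x ∈ {y | s < m y} from hx)]
        · rw [Set.indicator_of_notMem (show (x,s) ∉ A from fun hc => hx hc.2), zero_mul,
            Set.indicator_of_notMem (show x ∉ {y | s < m y} from hx)]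
      rw [h1, lintegral_indicator (show MeasurableSet {y | s < m y} from hm measurableSet_Ioi),
        Set.indicator_of_mem (show s ∈ Ioi (0:ℝ) from hs)]
    · have h1 : (fun x => A.indicator (fun _ => (1:ℝ≥0∞)) (x, s) * h x) = fun _ => 0 := by
        funext x
        rw [Set.indicator_of_notMem (show (x,s) ∉ A from fun hc => hs hc.1), zero_mul]
      rw [h1, lintegral_zero, Set.indicator_of_notMem (show s ∉ Ioi (0:ℝ) from hs)]
  calc ∫⁻ x, h x * ENNReal.ofReal (m x) ∂ρ
      = ∫⁻ x, ∫⁻ s, A.indicator (fun _ => (1:ℝ≥0∞)) (x, s) * h x ∂(volume : Measure ℝ) ∂ρ :=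
        lintegral_congr step1
    _ = ∫⁻ s, ∫⁻ x, A.indicator (fun _ => (1:ℝ≥0∞)) (x, s) * h x ∂ρ ∂(volume : Measure ℝ) :=
        lintegral_lintegral_swap huncurry.aemeasurable
    _ = ∫⁻ s, (Ioi (0:ℝ)).indicator (fun s => ∫⁻ x in {y | s < m y}, h x ∂ρ) s
          ∂(volume : Measure ℝ) := lintegral_congr step3
    _ = ∫⁻ s in Ioi (0:ℝ), ∫⁻ x in {y | s < m y}, h x ∂ρ := by
        rw [lintegral_indicator measurableSet_Ioi]

lemma lint_mono_union {W : ℝ → ℝ≥0∞} (hW : Measurable W) (s : ℕ → Set ℝ)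
    (hmeas : ∀ n, MeasurableSet (s n)) (hmono : Monotone s) :
    ∫⁻ x in ⋃ n, s n, W x ∂μ₀ = ⨆ n, ∫⁻ x in s n, W x ∂μ₀ := by
  have hind : (⋃ n, s n).indicator W = fun x => ⨆ n, (s n).indicator W x := by
    funext x
    by_cases hx : x ∈ ⋃ n, s n
    · rcases mem_iUnion.1 hx with ⟨n, hn⟩
      rw [Set.indicator_of_mem hx]
      refine le_antisymm (le_iSup_of_le n (by rw [Set.indicator_of_mem hn])) (iSup_le fun k => ?_)
      exact Set.indicator_le_self' (fun _ _ => zero_le) x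
    · rw [Set.indicator_of_notMem hx]
      exact (le_antisymm (iSup_le fun k => by
        simp [Set.indicator_of_notMem (fun hk => hx (mem_iUnion.2 ⟨k, hk⟩))])
        zero_le).symm
  rw [← lintegral_indicator (MeasurableSet.iUnion hmeas), hind,
    lintegral_iSup (fun n => hW.indicator (hmeas n))
      (fun i j hij => Set.indicator_le_indicator_of_subset (hmono hij) (fun _ => zero_le))]
  congr 1
  funext n
  rw [lintegral_indicator (hmeas n)]

end Aux6

namespace Aux7
open Aux Aux2 Aux3 Aux4 Aux5 Aux6

variable {u₀ v₀ F₁ F₂ : ℝ → ℝ} {μ₀ η ν₁ ν₂ : Measure ℝ}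

lemma restrict_Ioc_eq (hp : StandardPair u₀ v₀) (hη : IsLSR01 v₀ η) :
    η.restrict (Ioc (0:ℝ) 1) = η.restrict (Ioo (0:ℝ) 1) := by
  apply Measure.restrict_congr_set
  rw [MeasureTheory.ae_eq_set]
  constructor
  · have h1 : Ioc (0:ℝ) 1 \ Ioo 0 1 = {1} := by
      ext x
      simp only [mem_diff, mem_Ioc, mem_Ioo, mem_singleton_iff]
      constructor
      · rintro ⟨⟨h1, h2⟩, h3⟩
        by_contra hne
        exact h3 ⟨h1, lt_of_le_of_ne h2 hne⟩
      · rintro rfl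
        exact ⟨⟨zero_lt_one, le_refl _⟩, fun h => absurd h.2 (lt_irrefl _)⟩
    rw [h1]
    exact eta_singleton_one hp hη
  · have h2 : Ioo (0:ℝ) 1 \ Ioc 0 1 = ∅ := by
      rw [diff_eq_empty]
      exact Ioo_subset_Ioc_self
    rw [h2]
    exact measure_empty

section Forward

/-- Forward step 1: `LowerOrder` gives the `A`-inequality at every level `u₀ t`. -/
lemma forward_A (hp : StandardPair u₀ v₀) (hF₁ : IsCDF F₁) (hF₂ : IsCDF F₂)
    (hμ₀ : IsLSL u₀ μ₀) (hη : IsLSR01 v₀ η)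
    (hG₁ : IntegrableOn (Gf u₀ F₁) (Ioo (0:ℝ) 1) η)
    (hG₂ : IntegrableOn (Gf u₀ F₂) (Ioo (0:ℝ) 1) η)
    (h : LowerOrder v₀ F₁ F₂ μ₀) (t : ℝ) :
    ∫ α in Ioo (0:ℝ) 1, max (Gf u₀ F₁ α - u₀ t) 0 ∂η
      ≤ ∫ α in Ioo (0:ℝ) 1, max (Gf u₀ F₂ α - u₀ t) 0 ∂η := by
  have hfin := eta_fin01 hp hη
  have hm : Monotone (fun x : ℝ => if t ≤ x then (1:ℝ) else 0) := by
    intro a b hab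
    dsimp only
    split_ifs with h1 h2 h2
    · exact le_refl _
    · exact absurd (le_trans h1 hab) h2
    · exact zero_le_one
    · exact le_refl _
  have hLO := h (fun x => if t ≤ x then 1 else 0) hm
    (fun x => by split_ifs <;> norm_num)
  have hdens : (fun x => ENNReal.ofReal (if t ≤ x then (1:ℝ) else 0))
      = (Ici t).indicator (1 : ℝ → ℝ≥0∞) := by
    funext x
    by_cases hx : t ≤ x
    · simp [if_pos hx, Set.indicator_of_mem (show x ∈ Ici t from hx)]
    · simp [if_neg hx, Set.indicator_of_notMem (show x ∉ Ici t from hx)]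
  rw [hdens, withDensity_indicator_one measurableSet_Ici] at hLO
  rw [show (∫⁻ x, ENNReal.ofReal (1 - v₀ (F₁ x)) ∂(μ₀.restrict (Ici t)))
      = ∫⁻ x in Ici t, ENNReal.ofReal (1 - v₀ (F₁ x)) ∂μ₀ from rfl,
    show (∫⁻ x, ENNReal.ofReal (1 - v₀ (F₂ x)) ∂(μ₀.restrict (Ici t)))
      = ∫⁻ x in Ici t, ENNReal.ofReal (1 - v₀ (F₂ x)) ∂μ₀ from rfl,
    bridge hp hF₁ hμ₀ hη t, bridge hp hF₂ hμ₀ hη t,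
    lofReal_eq hfin hG₁ (u₀ t), lofReal_eq hfin hG₂ (u₀ t)] at hLO
  exact (ENNReal.ofReal_le_ofReal_iff
    (setIntegral_nonneg measurableSet_Ioo (fun α _ => le_max_right _ _))).1 hLO

/-- Forward step 2: closed tails. -/
lemma forward_T_Ico (hp : StandardPair u₀ v₀) (hF₁ : IsCDF F₁) (hF₂ : IsCDF F₂)
    (hμ₀ : IsLSL u₀ μ₀) (hη : IsLSR01 v₀ η)
    (hG₁ : IntegrableOn (Gf u₀ F₁) (Ioo (0:ℝ) 1) η)
    (hG₂ : IntegrableOn (Gf u₀ F₂) (Ioo (0:ℝ) 1) η)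
    (h : LowerOrder v₀ F₁ F₂ μ₀) {β : ℝ} (hβ : β ∈ Ioo (0:ℝ) 1) :
    ∫ α in Ico β 1, Gf u₀ F₁ α ∂η ≤ ∫ α in Ico β 1, Gf u₀ F₂ α ∂η := by
  have hfin := eta_fin01 hp hη
  have hVsub : Ico β 1 ⊆ Ioo (0:ℝ) 1 := fun x hx => ⟨lt_of_lt_of_le hβ.1 hx.1, hx.2⟩
  have hA := forward_A hp hF₁ hF₂ hμ₀ hη hG₁ hG₂ h (qf F₂ β)
  have hc : u₀ (qf F₂ β) = Gf u₀ F₂ β := (Gf_eq hβ).symm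
  rw [hc] at hA
  refine T_of_A hfin hG₁ hG₂ measurableSet_Ico hVsub ?_ ?_ hA
  · intro α hα hm
    exact Gf_monoOn hp.u_mono hF₂ hβ hα hm.1
  · intro α hα hm
    have : α < β := by
      by_contra hge
      exact hm ⟨le_of_not_gt hge, hα.2⟩
    exact Gf_monoOn hp.u_mono hF₂ hα hβ this.le

/-- Forward step 3: open tails. -/
lemma forward_T_Ioo (hp : StandardPair u₀ v₀) (hF₁ : IsCDF F₁) (hF₂ : IsCDF F₂)
    (hμ₀ : IsLSL u₀ μ₀) (hη : IsLSR01 v₀ η)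
    (hG₁ : IntegrableOn (Gf u₀ F₁) (Ioo (0:ℝ) 1) η)
    (hG₂ : IntegrableOn (Gf u₀ F₂) (Ioo (0:ℝ) 1) η)
    (h : LowerOrder v₀ F₁ F₂ μ₀) {β : ℝ} (hβ : β ∈ Ico (0:ℝ) 1) :
    ∫ α in Ioo β 1, Gf u₀ F₁ α ∂η ≤ ∫ α in Ioo β 1, Gf u₀ F₂ α ∂η := by
  set γ : ℕ → ℝ := fun n => β + (1 - β)/(n+2) with hγ
  have hγmem : ∀ n, γ n ∈ Ioo (0:ℝ) 1 := by
    intro n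
    have hpos : 0 < (1 - β)/((n:ℝ)+2) :=
      div_pos (by linarith [hβ.2]) (by positivity)
    constructor
    · have := hβ.1; simp only [hγ]; linarith
    · simp only [hγ]
      have : (1 - β)/((n:ℝ)+2) < 1 - β := by
        apply div_lt_self (by linarith [hβ.2])
        have : (0:ℝ) ≤ n := Nat.cast_nonneg n
        linarith
      linarith
  have hmono : Monotone (fun n => Ico (γ n) 1) := by
    intro a b hab
    apply Ico_subset_Ico_left
    simp only [hγ]
    have h1 : ((a:ℝ)+2) ≤ ((b:ℝ)+2) := by
      have := (Nat.cast_le (α := ℝ)).2 hab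
      linarith
    gcongr
    linarith [hβ.2]
  have hUnion : ⋃ n, Ico (γ n) 1 = Ioo β 1 := by
    ext x
    simp only [mem_iUnion, mem_Ico, mem_Ioo]
    constructor
    · rintro ⟨n, h1, h2⟩
      refine ⟨?_, h2⟩
      have hpos : 0 < (1 - β)/((n:ℝ)+2) :=
        div_pos (by linarith [hβ.2]) (by positivity)
      simp only [hγ] at h1
      linarith
    · rintro ⟨h1, h2⟩
      rcases exists_nat_ge ((1 - β)/(x - β)) with ⟨n, hn⟩
      refine ⟨n, ?_, h2⟩
      simp only [hγ]
      rw [← sub_nonneg]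
      have hxβ : 0 < x - β := by linarith
      have h3 : (1 - β)/(x - β) ≤ (n:ℝ) + 2 := by linarith
      rw [div_le_iff₀ hxβ] at h3
      have h5 : (1 - β)/((n:ℝ)+2) ≤ x - β := by
        rw [div_le_iff₀ (by positivity)]
        nlinarith
      linarith
  have htend₁ : Tendsto (fun n => ∫ α in Ico (γ n) 1, Gf u₀ F₁ α ∂η) atTop
      (𝓝 (∫ α in Ioo β 1, Gf u₀ F₁ α ∂η)) := by
    have := tendsto_setIntegral_of_monotone (μ := η) (f := Gf u₀ F₁)
      (fun n => measurableSet_Ico) hmono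
      (by rw [hUnion]; exact hG₁.mono_set (fun x hx => ⟨lt_of_le_of_lt hβ.1 hx.1, hx.2⟩))
    rwa [hUnion] at this
  have htend₂ : Tendsto (fun n => ∫ α in Ico (γ n) 1, Gf u₀ F₂ α ∂η) atTop
      (𝓝 (∫ α in Ioo β 1, Gf u₀ F₂ α ∂η)) := by
    have := tendsto_setIntegral_of_monotone (μ := η) (f := Gf u₀ F₂)
      (fun n => measurableSet_Ico) hmono
      (by rw [hUnion]; exact hG₂.mono_set (fun x hx => ⟨lt_of_le_of_lt hβ.1 hx.1, hx.2⟩))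
    rwa [hUnion] at this
  exact le_of_tendsto_of_tendsto' htend₁ htend₂
    (fun n => forward_T_Ico hp hF₁ hF₂ hμ₀ hη hG₁ hG₂ h (hγmem n))

end Forward

end Aux7

namespace Aux8
open Aux Aux2 Aux3 Aux4 Aux5 Aux6 Aux7

variable {u₀ v₀ F₁ F₂ : ℝ → ℝ} {μ₀ η ν₁ ν₂ : Measure ℝ}

lemma backward_T_Ioo (hp : StandardPair u₀ v₀) (hF₁ : IsCDF F₁) (hF₂ : IsCDF F₂)
    (hη : IsLSR01 v₀ η)
    (hR : ∀ v mtilde : ℝ → ℝ,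
      MonotoneOn mtilde (Icc 0 1) → (∀ t ∈ Icc (0:ℝ) 1, 0 ≤ mtilde t) →
      (∀ α ∈ Icc (0:ℝ) 1, v α = ∫ t in Ioc 0 α, mtilde t ∂η) →
      (∀ α ∈ Icc (0:ℝ) 1, v α ∈ Icc (0:ℝ) 1) →
      ∫ α in Ioc 0 1, u₀ (qf F₁ α) * mtilde α ∂η ≤
        ∫ α in Ioc 0 1, u₀ (qf F₂ α) * mtilde α ∂η)
    {β : ℝ} (hβ : β ∈ Ico (0:ℝ) 1) :
    ∫ α in Ioo β 1, Gf u₀ F₁ α ∂η ≤ ∫ α in Ioo β 1, Gf u₀ F₂ α ∂η := by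
  set mt : ℝ → ℝ := fun t => if β < t then 1 else 0 with hmt
  have hmt_mono : MonotoneOn mt (Icc 0 1) := by
    intro a _ b _ hab
    simp only [hmt]
    split_ifs with h1 h2 h2
    exacts [le_refl _, absurd (lt_of_lt_of_le h1 hab) h2, zero_le_one, le_refl _]
  have hmt_nonneg : ∀ t ∈ Icc (0:ℝ) 1, 0 ≤ mt t := by
    intro t _
    simp only [hmt]
    split_ifs <;> norm_num
  have hmt_ind : mt = (Ioi β).indicator (fun _ => (1:ℝ)) := by
    funext t
    simp only [hmt]
    by_cases h : β < t
    · rw [if_pos h, Set.indicator_of_mem (show t ∈ Ioi β from h)]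
    · rw [if_neg h, Set.indicator_of_notMem (show t ∉ Ioi β from h)]
  have hval : ∀ α ∈ Icc (0:ℝ) 1, (∫ t in Ioc 0 α, mt t ∂η) ∈ Icc (0:ℝ) 1 := by
    intro α hα
    have hset : Ioc 0 α ∩ Ioi β = Ioc β α := by
      ext x
      simp only [mem_inter_iff, mem_Ioc, mem_Ioi]
      constructor
      · rintro ⟨⟨_, h2⟩, h3⟩; exact ⟨h3, h2⟩
      · rintro ⟨h1, h2⟩; exact ⟨⟨lt_of_le_of_lt hβ.1 h1, h2⟩, h1⟩
    rw [hmt_ind, setIntegral_indicator measurableSet_Ioi, hset, setIntegral_const, smul_eq_mul,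
      mul_one, measureReal_def]
    rcases le_or_gt α β with h|h
    · rw [Ioc_eq_empty (not_lt.2 h), measure_empty]
      simp
    · rw [hη β α hβ.1 h.le hα.2,
        ENNReal.toReal_ofReal (sub_nonneg.2 (hp.v_mono ⟨hβ.1, hβ.2.le⟩ hα h.le))]
      have h1 := (hp.v_mem α hα).2
      have h2 := (hp.v_mem β ⟨hβ.1, hβ.2.le⟩).1
      exact ⟨sub_nonneg.2 (hp.v_mono ⟨hβ.1, hβ.2.le⟩ hα h.le), by linarith⟩
  have hmain := hR (fun α => ∫ t in Ioc 0 α, mt t ∂η) mt hmt_mono hmt_nonneg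
    (fun α _ => rfl) hval
  have hconv : ∀ F : ℝ → ℝ, IsCDF F →
      ∫ α in Ioc (0:ℝ) 1, u₀ (qf F α) * mt α ∂η = ∫ α in Ioo β 1, Gf u₀ F α ∂η := by
    intro F hF
    rw [show (∫ α in Ioc (0:ℝ) 1, u₀ (qf F α) * mt α ∂η)
        = ∫ α, u₀ (qf F α) * mt α ∂(η.restrict (Ioc (0:ℝ) 1)) from rfl,
      restrict_Ioc_eq hp hη]
    have hcong : ∀ α ∈ Ioo (0:ℝ) 1, u₀ (qf F α) * mt α = (Ioi β).indicator (Gf u₀ F) α := by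
      intro α hα
      simp only [hmt]
      by_cases h : β < α
      · rw [if_pos h, mul_one, Set.indicator_of_mem (show α ∈ Ioi β from h), Gf_eq hα]
      · rw [if_neg h, mul_zero, Set.indicator_of_notMem (show α ∉ Ioi β from h)]
    rw [show (∫ α, u₀ (qf F α) * mt α ∂(η.restrict (Ioo (0:ℝ) 1)))
        = ∫ α in Ioo (0:ℝ) 1, u₀ (qf F α) * mt α ∂η from rfl,
      setIntegral_congr_fun measurableSet_Ioo hcong,
      setIntegral_indicator measurableSet_Ioi,
      show Ioo (0:ℝ) 1 ∩ Ioi β = Ioo β 1 from by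
        ext x
        simp only [mem_inter_iff, mem_Ioo, mem_Ioi]
        constructor
        · rintro ⟨⟨_, h2⟩, h3⟩; exact ⟨h3, h2⟩
        · rintro ⟨h1, h2⟩; exact ⟨⟨lt_of_le_of_lt hβ.1 h1, h2⟩, h1⟩]
  rwa [hconv F₁ hF₁, hconv F₂ hF₂] at hmain

lemma backward_T_Ico (hp : StandardPair u₀ v₀) (hF₁ : IsCDF F₁) (hF₂ : IsCDF F₂)
    (hη : IsLSR01 v₀ η)
    (hG₁ : IntegrableOn (Gf u₀ F₁) (Ioo (0:ℝ) 1) η)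
    (hG₂ : IntegrableOn (Gf u₀ F₂) (Ioo (0:ℝ) 1) η)
    (hR : ∀ v mtilde : ℝ → ℝ,
      MonotoneOn mtilde (Icc 0 1) → (∀ t ∈ Icc (0:ℝ) 1, 0 ≤ mtilde t) →
      (∀ α ∈ Icc (0:ℝ) 1, v α = ∫ t in Ioc 0 α, mtilde t ∂η) →
      (∀ α ∈ Icc (0:ℝ) 1, v α ∈ Icc (0:ℝ) 1) →
      ∫ α in Ioc 0 1, u₀ (qf F₁ α) * mtilde α ∂η ≤
        ∫ α in Ioc 0 1, u₀ (qf F₂ α) * mtilde α ∂η)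
    {β : ℝ} (hβ : β ∈ Ioo (0:ℝ) 1) :
    ∫ α in Ico β 1, Gf u₀ F₁ α ∂η ≤ ∫ α in Ico β 1, Gf u₀ F₂ α ∂η := by
  set γ : ℕ → ℝ := fun n => β - β/(n+2) with hγ
  have hγpos : ∀ n : ℕ, 0 < γ n := by
    intro n
    have h1 : β/((n:ℝ)+2) < β := div_lt_self hβ.1 (by norm_num; linarith [Nat.cast_nonneg (α := ℝ) n])
    simp only [hγ]
    linarith
  have hγlt : ∀ n : ℕ, γ n < β := by
    intro n
    have : 0 < β/((n:ℝ)+2) := div_pos hβ.1 (by positivity)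
    simp only [hγ]
    linarith
  have hγmem : ∀ n : ℕ, γ n ∈ Ico (0:ℝ) 1 := fun n => ⟨(hγpos n).le, lt_trans (hγlt n) hβ.2⟩
  have hanti : Antitone (fun n => Ioo (γ n) 1) := by
    intro a b hab
    apply Ioo_subset_Ioo_left
    simp only [hγ]
    have hc : (a:ℝ) ≤ b := Nat.cast_le.2 hab
    gcongr <;> linarith [hβ.1]
  have hInter : ⋂ n, Ioo (γ n) 1 = Ico β 1 := by
    ext x
    simp only [mem_iInter, mem_Ioo, mem_Ico]
    constructor
    · intro h
      refine ⟨?_, (h 0).2⟩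
      by_contra hlt
      push_neg at hlt
      have hβx : 0 < β - x := by linarith
      rcases exists_nat_ge (β/(β - x)) with ⟨n, hn⟩
      have h3 : β/(β - x) ≤ (n:ℝ) + 2 := by linarith
      rw [div_le_iff₀ hβx] at h3
      have h5 : β/((n:ℝ)+2) ≤ β - x := by
        rw [div_le_iff₀ (by positivity)]
        nlinarith
      have := (h n).1
      simp only [hγ] at this
      linarith
    · rintro ⟨h1, h2⟩
      exact fun n => ⟨lt_of_lt_of_le (hγlt n) h1, h2⟩
  have hsub : ∀ n, Ioo (γ n) 1 ⊆ Ioo (0:ℝ) 1 := fun n =>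
    Ioo_subset_Ioo_left (hγpos n).le
  have htend₁ : Tendsto (fun n => ∫ α in Ioo (γ n) 1, Gf u₀ F₁ α ∂η) atTop
      (𝓝 (∫ α in Ico β 1, Gf u₀ F₁ α ∂η)) := by
    have := tendsto_setIntegral_of_antitone (μ := η) (f := Gf u₀ F₁)
      (fun n => measurableSet_Ioo) hanti ⟨0, hG₁.mono_set (hsub 0)⟩
    rwa [hInter] at this
  have htend₂ : Tendsto (fun n => ∫ α in Ioo (γ n) 1, Gf u₀ F₂ α ∂η) atTop
      (𝓝 (∫ α in Ico β 1, Gf u₀ F₂ α ∂η)) := by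
    have := tendsto_setIntegral_of_antitone (μ := η) (f := Gf u₀ F₂)
      (fun n => measurableSet_Ioo) hanti ⟨0, hG₂.mono_set (hsub 0)⟩
    rwa [hInter] at this
  exact le_of_tendsto_of_tendsto' htend₁ htend₂
    (fun n => backward_T_Ioo hp hF₁ hF₂ hη hR (hγmem n))

lemma backward_A (hp : StandardPair u₀ v₀) (hF₁ : IsCDF F₁) (hF₂ : IsCDF F₂)
    (hη : IsLSR01 v₀ η)
    (hG₁ : IntegrableOn (Gf u₀ F₁) (Ioo (0:ℝ) 1) η)
    (hG₂ : IntegrableOn (Gf u₀ F₂) (Ioo (0:ℝ) 1) η)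
    (hR : ∀ v mtilde : ℝ → ℝ,
      MonotoneOn mtilde (Icc 0 1) → (∀ t ∈ Icc (0:ℝ) 1, 0 ≤ mtilde t) →
      (∀ α ∈ Icc (0:ℝ) 1, v α = ∫ t in Ioc 0 α, mtilde t ∂η) →
      (∀ α ∈ Icc (0:ℝ) 1, v α ∈ Icc (0:ℝ) 1) →
      ∫ α in Ioc 0 1, u₀ (qf F₁ α) * mtilde α ∂η ≤
        ∫ α in Ioc 0 1, u₀ (qf F₂ α) * mtilde α ∂η)
    (c : ℝ) :
    ∫ α in Ioo (0:ℝ) 1, max (Gf u₀ F₁ α - c) 0 ∂η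
      ≤ ∫ α in Ioo (0:ℝ) 1, max (Gf u₀ F₂ α - c) 0 ∂η := by
  have hfin := eta_fin01 hp hη
  set U := {α ∈ Ioo (0:ℝ) 1 | c < Gf u₀ F₁ α} with hU
  by_cases hne : U = ∅
  · have hzero : ∫ α in Ioo (0:ℝ) 1, max (Gf u₀ F₁ α - c) 0 ∂η
        = ∫ α in Ioo (0:ℝ) 1, (0:ℝ) ∂η := by
      apply setIntegral_congr_fun measurableSet_Ioo
      intro α hα
      have : ¬ c < Gf u₀ F₁ α := fun h => by
        have : α ∈ U := ⟨hα, h⟩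
        rw [hne] at this
        exact this
      exact max_eq_right (sub_nonpos.2 (le_of_not_gt this))
    rw [hzero, integral_zero]
    exact setIntegral_nonneg measurableSet_Ioo (fun α _ => le_max_right _ _)
  · have hUne : U.Nonempty := nonempty_iff_ne_empty.2 hne
    have hbdd : BddBelow U := ⟨0, fun x hx => hx.1.1.le⟩
    set β := sInf U with hβdef
    have hβ0 : 0 ≤ β := le_csInf hUne (fun x hx => hx.1.1.le)
    have hβ1 : β < 1 := by
      rcases hUne with ⟨u, hu⟩
      exact lt_of_le_of_lt (csInf_le hbdd hu) hu.1.2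
    by_cases hmem : β ∈ U
    · have hβIoo : β ∈ Ioo (0:ℝ) 1 := hmem.1
      have hiff : ∀ α ∈ Ioo (0:ℝ) 1, α ∈ Ico β 1 ↔ c < Gf u₀ F₁ α := by
        intro α hα
        constructor
        · intro hm
          rcases eq_or_lt_of_le hm.1 with h|h
          · rw [← h]; exact hmem.2
          · rcases exists_lt_of_csInf_lt hUne h with ⟨u, hu, hux⟩
            exact lt_of_lt_of_le hu.2 (Gf_monoOn hp.u_mono hF₁ hu.1 hα hux.le)
        · intro h
          exact ⟨csInf_le hbdd ⟨hα, h⟩, hα.2⟩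
      exact A_of_T hfin hG₁ hG₂ measurableSet_Ico
        (fun x hx => ⟨lt_of_lt_of_le hβIoo.1 hx.1, hx.2⟩) hiff
        (backward_T_Ico hp hF₁ hF₂ hη hG₁ hG₂ hR hβIoo)
    · have hiff : ∀ α ∈ Ioo (0:ℝ) 1, α ∈ Ioo β 1 ↔ c < Gf u₀ F₁ α := by
        intro α hα
        constructor
        · intro hm
          rcases exists_lt_of_csInf_lt hUne hm.1 with ⟨u, hu, hux⟩
          exact lt_of_lt_of_le hu.2 (Gf_monoOn hp.u_mono hF₁ hu.1 hα hux.le)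
        · intro h
          have hUα : α ∈ U := ⟨hα, h⟩
          refine ⟨lt_of_le_of_ne (csInf_le hbdd hUα) ?_, hα.2⟩
          intro heq
          exact hmem (heq ▸ hUα)
      exact A_of_T hfin hG₁ hG₂ measurableSet_Ioo
        (fun x hx => ⟨lt_of_le_of_lt hβ0 hx.1, hx.2⟩) hiff
        (backward_T_Ioo hp hF₁ hF₂ hη hR ⟨hβ0, hβ1⟩)

end Aux8

namespace Aux9
open Aux Aux2 Aux3 Aux4 Aux5 Aux6 Aux7 Aux8

variable {u₀ v₀ F₁ F₂ : ℝ → ℝ} {μ₀ η ν₁ ν₂ : Measure ℝ}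

lemma backward_main (hp : StandardPair u₀ v₀) (hF₁ : IsCDF F₁) (hF₂ : IsCDF F₂)
    (hμ₀ : IsLSL u₀ μ₀) (hη : IsLSR01 v₀ η)
    (hG₁ : IntegrableOn (Gf u₀ F₁) (Ioo (0:ℝ) 1) η)
    (hG₂ : IntegrableOn (Gf u₀ F₂) (Ioo (0:ℝ) 1) η)
    (hR : ∀ v mtilde : ℝ → ℝ,
      MonotoneOn mtilde (Icc 0 1) → (∀ t ∈ Icc (0:ℝ) 1, 0 ≤ mtilde t) →
      (∀ α ∈ Icc (0:ℝ) 1, v α = ∫ t in Ioc 0 α, mtilde t ∂η) →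
      (∀ α ∈ Icc (0:ℝ) 1, v α ∈ Icc (0:ℝ) 1) →
      ∫ α in Ioc 0 1, u₀ (qf F₁ α) * mtilde α ∂η ≤
        ∫ α in Ioc 0 1, u₀ (qf F₂ α) * mtilde α ∂η) :
    LowerOrder v₀ F₁ F₂ μ₀ := by
  intro m hm hm0
  haveI : SigmaFinite μ₀ := sigmaFinite_of_isLSL hμ₀
  have hfin := eta_fin01 hp hη
  have hW₁ := measurable_W hp hF₁
  have hW₂ := measurable_W hp hF₂
  have hmmeas : Measurable m := hm.measurable
  have hP : ∀ t : ℝ, ∫⁻ x in Ici t, ENNReal.ofReal (1 - v₀ (F₁ x)) ∂μ₀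
      ≤ ∫⁻ x in Ici t, ENNReal.ofReal (1 - v₀ (F₂ x)) ∂μ₀ := by
    intro t
    rw [bridge hp hF₁ hμ₀ hη t, bridge hp hF₂ hμ₀ hη t,
      lofReal_eq hfin hG₁ (u₀ t), lofReal_eq hfin hG₂ (u₀ t)]
    exact ENNReal.ofReal_le_ofReal (backward_A hp hF₁ hF₂ hη hG₁ hG₂ hR (u₀ t))
  have hPU : ∀ s : ℝ, ∫⁻ x in {y | s < m y}, ENNReal.ofReal (1 - v₀ (F₁ x)) ∂μ₀
      ≤ ∫⁻ x in {y | s < m y}, ENNReal.ofReal (1 - v₀ (F₂ x)) ∂μ₀ := by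
    intro s
    rcases upperset_cases m hm s with h|h|⟨a,h⟩|⟨a,h⟩
    · rw [h]
      simp
    · rw [h]
      have hcover : ⋃ n : ℕ, Ici (-(n:ℝ)) = univ := by
        apply eq_univ_of_forall
        intro x
        rcases exists_nat_gt (-x) with ⟨n, hn⟩
        exact mem_iUnion.2 ⟨n, by simp only [mem_Ici]; linarith⟩
      have hmono : Monotone (fun n : ℕ => Ici (-(n:ℝ))) := by
        intro a b hab
        apply Ici_subset_Ici.2
        have : (a:ℝ) ≤ b := Nat.cast_le.2 hab
        linarith
      rw [← hcover, lint_mono_union hW₁ _ (fun n => measurableSet_Ici) hmono,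
        lint_mono_union hW₂ _ (fun n => measurableSet_Ici) hmono]
      exact iSup_mono (fun n => hP _)
    · rw [h]
      have hcover : ⋃ n : ℕ, Ici (a + 1/((n:ℝ)+1)) = Ioi a := by
        ext x
        simp only [mem_iUnion, mem_Ici, mem_Ioi]
        constructor
        · rintro ⟨n, hn⟩
          have := seq_pos n
          linarith
        · intro hx
          rcases exists_nat_one_div_lt (show (0:ℝ) < x - a by linarith) with ⟨n, hn⟩
          exact ⟨n, by linarith⟩
      have hmono : Monotone (fun n : ℕ => Ici (a + 1/((n:ℝ)+1))) := by
        intro i j hij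
        apply Ici_subset_Ici.2
        have h1 : ((i:ℝ)+1) ≤ ((j:ℝ)+1) := by
          have : (i:ℝ) ≤ j := Nat.cast_le.2 hij
          linarith
        have := one_div_le_one_div_of_le (by positivity : (0:ℝ) < (i:ℝ)+1) h1
        linarith
      rw [← hcover, lint_mono_union hW₁ _ (fun n => measurableSet_Ici) hmono,
        lint_mono_union hW₂ _ (fun n => measurableSet_Ici) hmono]
      exact iSup_mono (fun n => hP _)
    · rw [h]
      exact hP a
  rw [lintegral_withDensity_eq_lintegral_mul μ₀ hmmeas.ennreal_ofReal hW₁,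
    lintegral_withDensity_eq_lintegral_mul μ₀ hmmeas.ennreal_ofReal hW₂]
  have hcomm : ∀ W : ℝ → ℝ≥0∞, ((fun x => ENNReal.ofReal (m x)) * W)
      = fun x => W x * ENNReal.ofReal (m x) := fun W => funext (fun x => mul_comm _ _)
  rw [hcomm, hcomm, layercake μ₀ hW₁ hmmeas hm0, layercake μ₀ hW₂ hmmeas hm0]
  exact lintegral_mono (fun s => hPU s)

end Aux9

namespace Aux10
open Aux Aux2 Aux3 Aux4 Aux5 Aux6 Aux7 Aux8

variable {u₀ v₀ F₁ F₂ : ℝ → ℝ} {μ₀ η ν₁ ν₂ : Measure ℝ}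

lemma monotone_clampf {f : ℝ → ℝ} (hf : MonotoneOn f (Icc 0 1)) :
    Monotone (fun x : ℝ => f (max 0 (min 1 x))) := by
  intro a b hab
  have ha : max 0 (min 1 a) ∈ Icc (0:ℝ) 1 := ⟨le_max_left _ _, max_le zero_le_one (min_le_left _ _)⟩
  have hb : max 0 (min 1 b) ∈ Icc (0:ℝ) 1 := ⟨le_max_left _ _, max_le zero_le_one (min_le_left _ _)⟩
  exact hf ha hb (max_le_max le_rfl (min_le_min le_rfl hab))

lemma clamp_mem (x : ℝ) : max 0 (min 1 x) ∈ Icc (0:ℝ) 1 :=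
  ⟨le_max_left _ _, max_le zero_le_one (min_le_left _ _)⟩

lemma meas_tail_lint {g : ℝ → ℝ≥0∞} (hg : Measurable g) {M : ℝ → ℝ} (hM : Measurable M)
    (ρ : Measure ℝ) [SFinite ρ] :
    Measurable (fun s => ∫⁻ α in {y | s < M y}, g α ∂ρ) := by
  have hD : MeasurableSet {p : ℝ × ℝ | p.1 < M p.2} :=
    measurableSet_lt measurable_fst (hM.comp measurable_snd)
  have h : (fun s => ∫⁻ α in {y | s < M y}, g α ∂ρ)
      = fun s => ∫⁻ α, ({p : ℝ × ℝ | p.1 < M p.2}).indicator (fun p => g p.2) (s, α) ∂ρ := by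
    funext s
    rw [← lintegral_indicator (show MeasurableSet {y : ℝ | s < M y} from hM measurableSet_Ioi)]
    refine lintegral_congr (fun α => ?_)
    by_cases h : s < M α
    · rw [Set.indicator_of_mem (show α ∈ {y : ℝ | s < M y} from h),
        Set.indicator_of_mem (show (s,α) ∈ {p : ℝ × ℝ | p.1 < M p.2} from h)]
    · rw [Set.indicator_of_notMem (show α ∉ {y : ℝ | s < M y} from h),
        Set.indicator_of_notMem (show (s,α) ∉ {p : ℝ × ℝ | p.1 < M p.2} from h)]
  rw [h]
  exact Measurable.lintegral_prod_right' ((hg.comp measurable_snd).indicator hD)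

lemma pos_sub_neg (x : ℝ) : x = max x 0 - max (-x) 0 := by
  rcases le_total x 0 with h|h
  · rw [max_eq_right h, max_eq_left (by linarith)]
    ring
  · rw [max_eq_left h, max_eq_right (by linarith)]
    ring

lemma ofReal_mul_pos (G Mv : ℝ) (hMv : 0 ≤ Mv) :
    ENNReal.ofReal (G * Mv) = ENNReal.ofReal (max G 0) * ENNReal.ofReal Mv := by
  rcases le_total G 0 with h|h
  · rw [max_eq_right h, ENNReal.ofReal_eq_zero.2 (mul_nonpos_iff.2 (Or.inr ⟨h, hMv⟩)), ENNReal.ofReal_zero,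
      zero_mul]
  · rw [max_eq_left h, ENNReal.ofReal_mul h]

lemma forward_main (hp : StandardPair u₀ v₀) (hF₁ : IsCDF F₁) (hF₂ : IsCDF F₂)
    (hμ₀ : IsLSL u₀ μ₀) (hη : IsLSR01 v₀ η)
    (hG₁ : IntegrableOn (Gf u₀ F₁) (Ioo (0:ℝ) 1) η)
    (hG₂ : IntegrableOn (Gf u₀ F₂) (Ioo (0:ℝ) 1) η)
    (h : LowerOrder v₀ F₁ F₂ μ₀)
    (v mtilde : ℝ → ℝ) (hmt : MonotoneOn mtilde (Icc 0 1))
    (hmt0 : ∀ t ∈ Icc (0:ℝ) 1, 0 ≤ mtilde t) :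
    ∫ α in Ioc (0:ℝ) 1, u₀ (qf F₁ α) * mtilde α ∂η ≤
      ∫ α in Ioc (0:ℝ) 1, u₀ (qf F₂ α) * mtilde α ∂η := by
  have hfin := eta_fin01 hp hη
  haveI : IsFiniteMeasure (η.restrict (Ioo (0:ℝ) 1)) := hfin
  set M : ℝ → ℝ := fun s => mtilde (max 0 (min 1 s)) with hMdef
  have hMmono : Monotone M := monotone_clampf hmt
  have hM0 : ∀ s, 0 ≤ M s := fun s => hmt0 _ (clamp_mem s)
  have hMmeas : Measurable M := hMmono.measurable
  have hMbdd : ∀ s, M s ≤ mtilde 1 := fun s =>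
    hmt (clamp_mem s) ⟨zero_le_one, le_refl _⟩ (clamp_mem s).2
  have hMeq : ∀ α ∈ Ioo (0:ℝ) 1, M α = mtilde α := by
    intro α hα
    simp only [hMdef]
    rw [clamp_eq ⟨hα.1.le, hα.2.le⟩]
  -- reduce goal to Ioo integrals of Gf * M
  have hgoal_eq : ∀ F : ℝ → ℝ, IsCDF F →
      ∫ α in Ioc (0:ℝ) 1, u₀ (qf F α) * mtilde α ∂η
        = ∫ α in Ioo (0:ℝ) 1, Gf u₀ F α * M α ∂η := by
    intro F hF
    rw [show (∫ α in Ioc (0:ℝ) 1, u₀ (qf F α) * mtilde α ∂η)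
        = ∫ α, u₀ (qf F α) * mtilde α ∂(η.restrict (Ioc (0:ℝ) 1)) from rfl,
      restrict_Ioc_eq hp hη]
    apply setIntegral_congr_fun measurableSet_Ioo
    intro α hα
    show u₀ (qf F α) * mtilde α = Gf u₀ F α * M α
    rw [Gf_eq hα, hMeq α hα]
  rw [hgoal_eq F₁ hF₁, hgoal_eq F₂ hF₂]
  -- integrability of the products
  have hprod : ∀ {G : ℝ → ℝ}, Measurable G → IntegrableOn G (Ioo (0:ℝ) 1) η →
      IntegrableOn (fun α => G α * M α) (Ioo (0:ℝ) 1) η := by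
    intro G hGm hGi
    refine Integrable.mono' ((hGi.abs).const_mul (mtilde 1)) ((hGm.mul hMmeas).aestronglyMeasurable) ?_
    apply ae_of_all
    intro α
    rw [Real.norm_eq_abs, abs_mul, abs_of_nonneg (hM0 α)]
    calc |G α| * M α ≤ |G α| * mtilde 1 := by
          apply mul_le_mul_of_nonneg_left (hMbdd α) (abs_nonneg _)
      _ = mtilde 1 * |G α| := mul_comm _ _
  have hmG₁ := measurable_Gf hp.u_mono hF₁
  have hmG₂ := measurable_Gf hp.u_mono hF₂
  have hf₁ : IntegrableOn (fun α => Gf u₀ F₁ α * M α) (Ioo (0:ℝ) 1) η := hprod hmG₁ hG₁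
  have hf₂ : IntegrableOn (fun α => Gf u₀ F₂ α * M α) (Ioo (0:ℝ) 1) η := hprod hmG₂ hG₂
  -- real tail inequalities
  have hT : ∀ s : ℝ, ∫ α in {y | s < M y} ∩ Ioo (0:ℝ) 1, Gf u₀ F₁ α ∂η
      ≤ ∫ α in {y | s < M y} ∩ Ioo (0:ℝ) 1, Gf u₀ F₂ α ∂η := by
    intro s
    have hzero : ∀ (S : Set ℝ), S = ∅ →
        ∫ α in S, Gf u₀ F₁ α ∂η ≤ ∫ α in S, Gf u₀ F₂ α ∂η := by
      rintro S rfl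
      simp
    rcases upperset_cases M hMmono s with h'|h'|⟨a,h'⟩|⟨a,h'⟩
    · apply hzero
      rw [h', empty_inter]
    · rw [h', univ_inter]
      exact forward_T_Ioo hp hF₁ hF₂ hμ₀ hη hG₁ hG₂ h ⟨le_refl 0, zero_lt_one⟩
    · rw [h']
      rcases lt_or_ge a 0 with ha|ha
      · have : Ioi a ∩ Ioo (0:ℝ) 1 = Ioo 0 1 :=
          inter_eq_self_of_subset_right (fun x hx => lt_trans ha hx.1)
        rw [this]
        exact forward_T_Ioo hp hF₁ hF₂ hμ₀ hη hG₁ hG₂ h ⟨le_refl 0, zero_lt_one⟩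
      · rcases lt_or_ge a 1 with ha1|ha1
        · have : Ioi a ∩ Ioo (0:ℝ) 1 = Ioo a 1 := by
            ext x
            simp only [mem_inter_iff, mem_Ioi, mem_Ioo]
            constructor
            · rintro ⟨h1, _, h3⟩; exact ⟨h1, h3⟩
            · rintro ⟨h1, h2⟩; exact ⟨h1, lt_of_le_of_lt ha h1, h2⟩
          rw [this]
          exact forward_T_Ioo hp hF₁ hF₂ hμ₀ hη hG₁ hG₂ h ⟨ha, ha1⟩
        · apply hzero
          ext x
          simp only [mem_inter_iff, mem_Ioi, mem_Ioo, mem_empty_iff_false, iff_false, not_and]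
          intro h1 _
          linarith
    · rw [h']
      rcases le_or_gt a 0 with ha|ha
      · have : Ici a ∩ Ioo (0:ℝ) 1 = Ioo 0 1 :=
          inter_eq_self_of_subset_right (fun x hx => le_trans ha hx.1.le)
        rw [this]
        exact forward_T_Ioo hp hF₁ hF₂ hμ₀ hη hG₁ hG₂ h ⟨le_refl 0, zero_lt_one⟩
      · rcases lt_or_ge a 1 with ha1|ha1
        · have : Ici a ∩ Ioo (0:ℝ) 1 = Ico a 1 := by
            ext x
            simp only [mem_inter_iff, mem_Ici, mem_Ioo, mem_Ico]
            constructor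
            · rintro ⟨h1, _, h3⟩; exact ⟨h1, h3⟩
            · rintro ⟨h1, h2⟩; exact ⟨h1, lt_of_lt_of_le ha h1, h2⟩
          rw [this]
          exact forward_T_Ico hp hF₁ hF₂ hμ₀ hη hG₁ hG₂ h ⟨ha, ha1⟩
        · apply hzero
          ext x
          simp only [mem_inter_iff, mem_Ici, mem_Ioo, mem_empty_iff_false, iff_false, not_and]
          intro h1 _
          linarith
  -- ENNReal four-piece assembly
  set η01 := η.restrict (Ioo (0:ℝ) 1) with hη01
  haveI : IsFiniteMeasure η01 := hfin
  set oP₁ : ℝ → ℝ≥0∞ := fun α => ENNReal.ofReal (max (Gf u₀ F₁ α) 0) with hoP₁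
  set oN₁ : ℝ → ℝ≥0∞ := fun α => ENNReal.ofReal (max (-(Gf u₀ F₁ α)) 0) with hoN₁
  set oP₂ : ℝ → ℝ≥0∞ := fun α => ENNReal.ofReal (max (Gf u₀ F₂ α) 0) with hoP₂
  set oN₂ : ℝ → ℝ≥0∞ := fun α => ENNReal.ofReal (max (-(Gf u₀ F₂ α)) 0) with hoN₂
  have hmoP₁ : Measurable oP₁ := (hmG₁.max measurable_const).ennreal_ofReal
  have hmoN₁ : Measurable oN₁ := ((hmG₁.neg).max measurable_const).ennreal_ofReal
  have hmoP₂ : Measurable oP₂ := (hmG₂.max measurable_const).ennreal_ofReal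
  have hmoN₂ : Measurable oN₂ := ((hmG₂.neg).max measurable_const).ennreal_ofReal
  -- layer identities
  have hlayer : ∀ (g : ℝ → ℝ≥0∞), Measurable g →
      ∫⁻ α, g α * ENNReal.ofReal (M α) ∂η01
        = ∫⁻ s in Ioi (0:ℝ), ∫⁻ α in {y | s < M y}, g α ∂η01 :=
    fun g hg => layercake η01 hg hMmeas hM0
  -- expression of P and N via layercake
  have hP₁eq : ∫⁻ α, ENNReal.ofReal (Gf u₀ F₁ α * M α) ∂η01
      = ∫⁻ s in Ioi (0:ℝ), ∫⁻ α in {y | s < M y}, oP₁ α ∂η01 := by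
    rw [← hlayer oP₁ hmoP₁]
    exact lintegral_congr (fun α => ofReal_mul_pos _ _ (hM0 α))
  have hP₂eq : ∫⁻ α, ENNReal.ofReal (Gf u₀ F₂ α * M α) ∂η01
      = ∫⁻ s in Ioi (0:ℝ), ∫⁻ α in {y | s < M y}, oP₂ α ∂η01 := by
    rw [← hlayer oP₂ hmoP₂]
    exact lintegral_congr (fun α => ofReal_mul_pos _ _ (hM0 α))
  have hN₁eq : ∫⁻ α, ENNReal.ofReal (-(Gf u₀ F₁ α * M α)) ∂η01
      = ∫⁻ s in Ioi (0:ℝ), ∫⁻ α in {y | s < M y}, oN₁ α ∂η01 := by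
    rw [← hlayer oN₁ hmoN₁]
    refine lintegral_congr (fun α => ?_)
    rw [show -(Gf u₀ F₁ α * M α) = (-(Gf u₀ F₁ α)) * M α by ring]
    exact ofReal_mul_pos _ _ (hM0 α)
  have hN₂eq : ∫⁻ α, ENNReal.ofReal (-(Gf u₀ F₂ α * M α)) ∂η01
      = ∫⁻ s in Ioi (0:ℝ), ∫⁻ α in {y | s < M y}, oN₂ α ∂η01 := by
    rw [← hlayer oN₂ hmoN₂]
    refine lintegral_congr (fun α => ?_)
    rw [show -(Gf u₀ F₂ α * M α) = (-(Gf u₀ F₂ α)) * M α by ring]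
    exact ofReal_mul_pos _ _ (hM0 α)
  -- per-s inequality
  have hper : ∀ s : ℝ,
      (∫⁻ α in {y | s < M y}, oP₁ α ∂η01) + ∫⁻ α in {y | s < M y}, oN₂ α ∂η01
        ≤ (∫⁻ α in {y | s < M y}, oP₂ α ∂η01) + ∫⁻ α in {y | s < M y}, oN₁ α ∂η01 := by
    intro s
    have hMs : MeasurableSet {y : ℝ | s < M y} := hMmeas measurableSet_Ioi
    have hrr : η01.restrict {y | s < M y} = η.restrict ({y | s < M y} ∩ Ioo (0:ℝ) 1) := by
      rw [hη01, Measure.restrict_restrict hMs]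
    set V := {y | s < M y} ∩ Ioo (0:ℝ) 1 with hV
    have hVsub : V ⊆ Ioo (0:ℝ) 1 := inter_subset_right
    have hVmeas : MeasurableSet V := hMs.inter measurableSet_Ioo
    have hposp : ∀ {G : ℝ → ℝ}, IntegrableOn G (Ioo (0:ℝ) 1) η →
        IntegrableOn (fun α => max (G α) 0) (Ioo (0:ℝ) 1) η := fun hGi => hGi.pos_part
    have hoconv : ∀ (G : ℝ → ℝ), IntegrableOn G (Ioo (0:ℝ) 1) η →
        (∫⁻ α in {y | s < M y}, ENNReal.ofReal (max (G α) 0) ∂η01)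
          = ENNReal.ofReal (∫ α in V, max (G α) 0 ∂η) := by
      intro G hGi
      have hint : Integrable (fun α => max (G α) 0) (η.restrict V) := (hposp hGi).mono_set hVsub
      have h0 : ∫⁻ α in {y | s < M y}, ENNReal.ofReal (max (G α) 0) ∂η01
          = ∫⁻ α, ENNReal.ofReal (max (G α) 0) ∂(η.restrict V) := by rw [hrr]
      exact h0.trans (ofReal_integral_eq_lintegral_ofReal hint
        (ae_of_all _ (fun α => le_max_right _ _))).symm
    have e₁ := hoconv (Gf u₀ F₁) hG₁
    have e₂ := hoconv (Gf u₀ F₂) hG₂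
    have e₃ := hoconv (fun α => -(Gf u₀ F₁ α)) hG₁.neg
    have e₄ := hoconv (fun α => -(Gf u₀ F₂ α)) hG₂.neg
    rw [hoP₁, hoP₂, hoN₁, hoN₂, e₁, e₂, e₃, e₄,
      ← ENNReal.ofReal_add (setIntegral_nonneg hVmeas (fun α _ => le_max_right _ _))
        (setIntegral_nonneg hVmeas (fun α _ => le_max_right _ _)),
      ← ENNReal.ofReal_add (setIntegral_nonneg hVmeas (fun α _ => le_max_right _ _))
        (setIntegral_nonneg hVmeas (fun α _ => le_max_right _ _))]
    apply ENNReal.ofReal_le_ofReal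
    -- real inequality from hT
    have hsplit : ∀ (G : ℝ → ℝ), IntegrableOn G (Ioo (0:ℝ) 1) η →
        ∫ α in V, G α ∂η = (∫ α in V, max (G α) 0 ∂η) - ∫ α in V, max (-(G α)) 0 ∂η := by
      intro G hGi
      have hintp : IntegrableOn (fun α => max (G α) 0) V η := (hposp hGi).mono_set hVsub
      have hintn : IntegrableOn (fun α => max (-(G α)) 0) V η := (hposp hGi.neg).mono_set hVsub
      rw [← integral_sub hintp hintn]
      apply setIntegral_congr_fun hVmeas
      intro α _
      exact pos_sub_neg (G α)
    have hTs := hT s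
    rw [hsplit (Gf u₀ F₁) hG₁, hsplit (Gf u₀ F₂) hG₂] at hTs
    linarith
  -- finiteness
  have hfin4 : ∀ (f : ℝ → ℝ), IntegrableOn f (Ioo (0:ℝ) 1) η →
      (∫⁻ α, ENNReal.ofReal (f α) ∂η01) ≠ ⊤ := by
    intro f hf
    refine ne_of_lt (lt_of_le_of_lt ?_ hf.2)
    apply lintegral_mono
    intro α
    show ENNReal.ofReal (f α) ≤ ‖f α‖ₑ
    rw [Real.enorm_eq_ofReal_abs]
    exact ENNReal.ofReal_le_ofReal (le_abs_self _)
  have hPf₁ := hfin4 _ hf₁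
  have hNf₁ := hfin4 (fun α => -(Gf u₀ F₁ α * M α)) hf₁.neg
  have hPf₂ := hfin4 _ hf₂
  have hNf₂ := hfin4 (fun α => -(Gf u₀ F₂ α * M α)) hf₂.neg
  -- assemble
  have hmeasA : ∀ (g : ℝ → ℝ≥0∞), Measurable g →
      Measurable (fun s => ∫⁻ α in {y | s < M y}, g α ∂η01) := by
    intro g hg
    exact meas_tail_lint hg hMmeas η01
  have hsum : (∫⁻ α, ENNReal.ofReal (Gf u₀ F₁ α * M α) ∂η01)
        + ∫⁻ α, ENNReal.ofReal (-(Gf u₀ F₂ α * M α)) ∂η01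
      ≤ (∫⁻ α, ENNReal.ofReal (Gf u₀ F₂ α * M α) ∂η01)
        + ∫⁻ α, ENNReal.ofReal (-(Gf u₀ F₁ α * M α)) ∂η01 := by
    rw [hP₁eq, hP₂eq, hN₁eq, hN₂eq,
      ← lintegral_add_left ((hmeasA oP₁ hmoP₁)) ,
      ← lintegral_add_left ((hmeasA oP₂ hmoP₂))]
    apply lintegral_mono
    intro s
    exact hper s
  -- convert to real
  rw [integral_eq_lintegral_pos_part_sub_lintegral_neg_part hf₁,
    integral_eq_lintegral_pos_part_sub_lintegral_neg_part hf₂]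
  have h1 := ENNReal.toReal_mono (by
    exact ENNReal.add_ne_top.2 ⟨hPf₂, hNf₁⟩) hsum
  rw [ENNReal.toReal_add hPf₁ hNf₂, ENNReal.toReal_add hPf₂ hNf₁] at h1
  linarith

end Aux10


/-- **Theorem 2, (i)' ↔ (ii)'.**  Let `(u₀,v₀)` be a standard pair and
`F₁, F₂` cdf's satisfying conditions (a) and (b)'.  Then `F₁ ≺_{(u₀,v₀)} F₂` (the lower
ordering) iff `∫_0^1 u₀(F₁⁻¹(α)) dv(α) ≤ ∫_0^1 u₀(F₂⁻¹(α)) dv(α)` for all `v ∈ V₀`,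
i.e. all non-decreasing `v₀`-convex `v : [0,1] → [0,1]`, given by a non-negative
non-decreasing density `m̃` with respect to `dv₀`, so that `dv = m̃ dη`. -/
theorem theorem2_i_iff_ii
    (u₀ v₀ F₁ F₂ : ℝ → ℝ) (hpair : StandardPair u₀ v₀)
    (hF₁ : IsCDF F₁) (hF₂ : IsCDF F₂)
    (μ₀ : Measure ℝ) (hμ₀ : IsLSL u₀ μ₀)
    (η : Measure ℝ) (hη : IsLSR01 v₀ η)
    (ν₁ ν₂ : Measure ℝ)
    (hν₁ : IsLSR (fun x => v₀ (F₁ x)) ν₁) (hν₂ : IsLSR (fun x => v₀ (F₂ x)) ν₂)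
    (ha₁ : CondA u₀ ν₁) (ha₂ : CondA u₀ ν₂)
    (hb'₁ : CondB' v₀ F₁ μ₀) (hb'₂ : CondB' v₀ F₂ μ₀) :
    LowerOrder v₀ F₁ F₂ μ₀ ↔
    (∀ v mtilde : ℝ → ℝ,
      MonotoneOn mtilde (Icc 0 1) → (∀ t ∈ Icc (0:ℝ) 1, 0 ≤ mtilde t) →
      (∀ α ∈ Icc (0:ℝ) 1, v α = ∫ t in Ioc 0 α, mtilde t ∂η) →
      (∀ α ∈ Icc (0:ℝ) 1, v α ∈ Icc (0:ℝ) 1) →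
      ∫ α in Ioc 0 1, u₀ (qf F₁ α) * mtilde α ∂η ≤
        ∫ α in Ioc 0 1, u₀ (qf F₂ α) * mtilde α ∂η) := by
  have hG₁ : MeasureTheory.IntegrableOn (Aux3.Gf u₀ F₁) (Ioo (0:ℝ) 1) η :=
    Aux4.integrable_Gf hpair hF₁ hη hν₁ ha₁
  have hG₂ : MeasureTheory.IntegrableOn (Aux3.Gf u₀ F₂) (Ioo (0:ℝ) 1) η :=
    Aux4.integrable_Gf hpair hF₂ hη hν₂ ha₂
  constructor
  · intro h v mtilde hmt hmt0 _ _
    exact Aux10.forward_main hpair hF₁ hF₂ hμ₀ hη hG₁ hG₂ h v mtilde hmt hmt0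
  · intro hR
    exact Aux9.backward_main hpair hF₁ hF₂ hμ₀ hη hG₁ hG₂ hR

end
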